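/- arXiv:2307.01051 — 5 statements merged into one kernel-verified Lean document; each statement's English description precedes it below -/
import Mathlib

section
/- Let (X,d) be a metric space that is not discrete, i.e., contains an accumulation point x. Then the reach of x for the isometric embedding of X into its 1-Wasserstein space W_1(X) via Dirac deltas is zero: reach(δ_x, {δ_z : z ∈ X} ⊆ W_1(X)) = 0. Concretely, for every ε > 0 there exists a probability measure μ on X with W_1(δ_x, μ) < ε such that μ has at least two distinct nearest points among the Dirac measures {δ_z : z ∈ X}. -/
open MeasureTheory ENNReal Set

noncomputable section

/-- The set of couplings (transference plans) between two measures. -/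
def Couplings {X : Type*} [MeasurableSpace X] (μ ν : Measure X) :
    Set (Measure (X × X)) :=
  {π | π.map Prod.fst = μ ∧ π.map Prod.snd = ν}

/-- The `p`-Wasserstein (extended) distance between two measures. -/
def Wp {X : Type*} [PseudoEMetricSpace X] [MeasurableSpace X] (p : ℝ)
    (μ ν : Measure X) : ℝ≥0∞ :=
  (⨅ π ∈ Couplings μ ν, ∫⁻ z, edist z.1 z.2 ^ p ∂π) ^ (1 / p)

/-- The `p`-Wasserstein space: probability measures with finite `p`-th moment. -/
def WSpace (X : Type*) [PseudoEMetricSpace X] [MeasurableSpace X] (p : ℝ) :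
    Set (Measure X) :=
  {μ | IsProbabilityMeasure μ ∧ ∃ x₀ : X, ∫⁻ x, edist x x₀ ^ p ∂μ ≠ ⊤}

/-- The image of `X` in its Wasserstein space: the set of Dirac measures. -/
def Diracs (X : Type*) [MeasurableSpace X] : Set (Measure X) :=
  Set.range (Measure.dirac : X → Measure X)

/-- Distance from a point to a set, with respect to a distance function `ρ`. -/
def distToSet {Y : Type*} (ρ : Y → Y → ℝ≥0∞) (y : Y) (A : Set Y) : ℝ≥0∞ :=
  ⨅ a ∈ A, ρ y a

/-- `y` has a unique metric projection onto `A`. -/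
def HasUniqueProj {Y : Type*} (ρ : Y → Y → ℝ≥0∞) (A : Set Y) (y : Y) : Prop :=
  ∃! a, a ∈ A ∧ ρ y a = distToSet ρ y A

/-- The reach of `A` at `a ∈ A`, within the ambient set `S`: the supremum of radii `r`
such that every point of the ball `B_r(a) ∩ S` has a unique metric projection onto `A`. -/
def reachAt {Y : Type*} (ρ : Y → Y → ℝ≥0∞) (S A : Set Y) (a : Y) : ℝ≥0∞ :=
  sSup {r : ℝ≥0∞ | ∀ y ∈ S, ρ a y < r → HasUniqueProj ρ A y}

/-- The global reach of `A` within the ambient set `S`. -/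
def globalReach {Y : Type*} (ρ : Y → Y → ℝ≥0∞) (S A : Set Y) : ℝ≥0∞ :=
  ⨅ a ∈ A, reachAt ρ S A a

/-- A minimizing geodesic from `x` to `y`, parametrized proportionally on `[0,1]`. -/
def IsMinGeodesic {X : Type*} [PseudoMetricSpace X] (γ : ℝ → X) (x y : X) : Prop :=
  γ 0 = x ∧ γ 1 = y ∧
    ∀ s ∈ Set.Icc (0:ℝ) 1, ∀ t ∈ Set.Icc (0:ℝ) 1, dist (γ s) (γ t) = |s - t| * dist x y

/-- A geodesic metric space: any two points are joined by a minimizing geodesic. -/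
def IsGeodesicSpace (X : Type*) [PseudoMetricSpace X] : Prop :=
  ∀ x y : X, ∃ γ : ℝ → X, IsMinGeodesic γ x y

/-- `a` lies on some minimizing geodesic from `x` to `y`. -/
def OnMinGeodesic {X : Type*} [PseudoMetricSpace X] (a x y : X) : Prop :=
  ∃ γ : ℝ → X, ∃ t ∈ Set.Icc (0:ℝ) 1, IsMinGeodesic γ x y ∧ γ t = a

section Aux

variable {X : Type*} [MetricSpace X] [MeasurableSpace X] [BorelSpace X]

lemma wp_one_dirac_right (μ : Measure X) [IsProbabilityMeasure μ] (z : X) :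
    Wp 1 μ (Measure.dirac z) = ∫⁻ w, edist w z ∂μ := by
  have hm : Measurable fun w : X => edist w z := (continuous_id.edist continuous_const).measurable
  have hconst : ∀ π ∈ Couplings μ (Measure.dirac z),
      ∫⁻ p : X × X, edist p.1 p.2 ∂π = ∫⁻ w, edist w z ∂μ := by
    rintro π ⟨h1, h2⟩
    have hz : π {p : X × X | p.2 ≠ z} = 0 := by
      have := congrArg (fun m : Measure X => m ({z}ᶜ)) h2
      simpa [Measure.map_apply measurable_snd (measurableSet_singleton z).compl,
        Set.preimage, Measure.dirac_apply' _ (measurableSet_singleton z).compl] using this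
    have hae : ∀ᵐ p ∂π, p.2 = z := by
      rw [MeasureTheory.ae_iff]; exact hz
    calc ∫⁻ p : X × X, edist p.1 p.2 ∂π = ∫⁻ p : X × X, edist p.1 z ∂π :=
        lintegral_congr_ae (hae.mono fun p hp => by dsimp only; rw [hp])
      _ = ∫⁻ w, edist w z ∂(π.map Prod.fst) :=
        (lintegral_map hm measurable_fst).symm
      _ = ∫⁻ w, edist w z ∂μ := by rw [h1]
  have hcpl : μ.prod (Measure.dirac z) ∈ Couplings μ (Measure.dirac z) := by
    constructor <;> simp [Measure.map_fst_prod, Measure.map_snd_prod]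
  have : (⨅ π ∈ Couplings μ (Measure.dirac z), ∫⁻ p : X × X, edist p.1 p.2 ∂π)
      = ∫⁻ w, edist w z ∂μ := by
    refine le_antisymm (iInf₂_le_of_le _ hcpl (le_of_eq (hconst _ hcpl)))
      (le_iInf₂ fun π hπ => (hconst π hπ).ge)
  simpa [Wp, ENNReal.rpow_one] using this

lemma wp_one_dirac_left (μ : Measure X) [IsProbabilityMeasure μ] (z : X) :
    Wp 1 (Measure.dirac z) μ = ∫⁻ w, edist z w ∂μ := by
  have hm : Measurable fun w : X => edist z w := (continuous_const.edist continuous_id).measurable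
  have hconst : ∀ π ∈ Couplings (Measure.dirac z) μ,
      ∫⁻ p : X × X, edist p.1 p.2 ∂π = ∫⁻ w, edist z w ∂μ := by
    rintro π ⟨h1, h2⟩
    have hz : π {p : X × X | p.1 ≠ z} = 0 := by
      have := congrArg (fun m : Measure X => m ({z}ᶜ)) h1
      simpa [Measure.map_apply measurable_fst (measurableSet_singleton z).compl,
        Set.preimage, Measure.dirac_apply' _ (measurableSet_singleton z).compl] using this
    have hae : ∀ᵐ p ∂π, p.1 = z := by
      rw [MeasureTheory.ae_iff]; exact hz
    calc ∫⁻ p : X × X, edist p.1 p.2 ∂π = ∫⁻ p : X × X, edist z p.2 ∂π :=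
        lintegral_congr_ae (hae.mono fun p hp => by dsimp only; rw [hp])
      _ = ∫⁻ w, edist z w ∂(π.map Prod.snd) :=
        (lintegral_map hm measurable_snd).symm
      _ = ∫⁻ w, edist z w ∂μ := by rw [h2]
  have hcpl : (Measure.dirac z).prod μ ∈ Couplings (Measure.dirac z) μ := by
    constructor <;> simp [Measure.map_fst_prod, Measure.map_snd_prod]
  have : (⨅ π ∈ Couplings (Measure.dirac z) μ, ∫⁻ p : X × X, edist p.1 p.2 ∂π)
      = ∫⁻ w, edist z w ∂μ := by
    refine le_antisymm (iInf₂_le_of_le _ hcpl (le_of_eq (hconst _ hcpl)))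
      (le_iInf₂ fun π hπ => (hconst π hπ).ge)
  simpa [Wp, ENNReal.rpow_one] using this

lemma key_reach (x : X) (hx : ∀ ε : ℝ, 0 < ε → ∃ y : X, y ≠ x ∧ dist x y < ε) :
    ∀ ε : ℝ≥0∞, 0 < ε → ∃ μ ∈ WSpace X 1,
      Wp 1 (Measure.dirac x) μ < ε ∧
      ∃ ν₁ ∈ Diracs X, ∃ ν₂ ∈ Diracs X, ν₁ ≠ ν₂ ∧
        Wp 1 μ ν₁ = distToSet (Wp 1) μ (Diracs X) ∧
        Wp 1 μ ν₂ = distToSet (Wp 1) μ (Diracs X) := by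
  intro ε hε
  obtain ⟨y, hy, hlt⟩ : ∃ y : X, y ≠ x ∧ edist x y < ε := by
    rcases eq_or_ne ε ⊤ with rfl | hεt
    · obtain ⟨y, hy, _⟩ := hx 1 one_pos
      exact ⟨y, hy, edist_lt_top x y⟩
    · obtain ⟨y, hy, hd⟩ := hx ε.toReal (ENNReal.toReal_pos hε.ne' hεt)
      exact ⟨y, hy, by rw [← ENNReal.ofReal_toReal hεt]; exact edist_lt_ofReal.mpr hd⟩
  set μ : Measure X := (2⁻¹ : ℝ≥0∞) • Measure.dirac x + (2⁻¹ : ℝ≥0∞) • Measure.dirac y with hμdef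
  haveI : IsProbabilityMeasure μ := ⟨by simp [hμdef, ENNReal.inv_two_add_inv_two]⟩
  have hint : ∀ f : X → ℝ≥0∞, Measurable f →
      ∫⁻ w, f w ∂μ = 2⁻¹ * f x + 2⁻¹ * f y := by
    intro f hf
    simp [hμdef, lintegral_add_measure, lintegral_smul_measure, lintegral_dirac' _ hf]
  have hWright : ∀ z : X, Wp 1 μ (Measure.dirac z) = 2⁻¹ * edist x z + 2⁻¹ * edist y z := by
    intro z
    rw [wp_one_dirac_right]
    exact hint _ ((continuous_id.edist continuous_const).measurable)
  have hdset : distToSet (Wp 1) μ (Diracs X) = 2⁻¹ * edist x y := by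
    unfold distToSet Diracs
    rw [iInf_range]
    refine le_antisymm (iInf_le_of_le x ?_) (le_iInf fun z => ?_)
    · rw [hWright]; simp [edist_comm]
    · rw [hWright]
      calc 2⁻¹ * edist x y ≤ 2⁻¹ * (edist x z + edist z y) := by
            gcongr; exact edist_triangle x z y
        _ = 2⁻¹ * edist x z + 2⁻¹ * edist y z := by rw [mul_add, edist_comm z y]
  have hmem : μ ∈ WSpace X 1 := by
    refine ⟨inferInstance, x, ?_⟩
    have : ∫⁻ w, edist w x ^ (1:ℝ) ∂μ = 2⁻¹ * edist x x + 2⁻¹ * edist y x := by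
      simpa [ENNReal.rpow_one] using hint (fun w => edist w x)
        ((continuous_id.edist continuous_const).measurable)
    rw [this]
    simp [edist_ne_top y x, ENNReal.mul_ne_top]
  refine ⟨μ, hmem, ?_, Measure.dirac x, Set.mem_range_self x, Measure.dirac y,
    Set.mem_range_self y, ?_, ?_, ?_⟩
  · have : Wp 1 (Measure.dirac x) μ = 2⁻¹ * edist x x + 2⁻¹ * edist x y := by
      rw [wp_one_dirac_left]
      exact hint _ ((continuous_const.edist continuous_id).measurable)
    rw [this]
    simp only [edist_self, mul_zero, zero_add]
    calc 2⁻¹ * edist x y ≤ 1 * edist x y := by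
          gcongr; exact ENNReal.inv_le_one.mpr one_le_two
      _ = edist x y := one_mul _
      _ < ε := hlt
  · intro h
    exact hy ((MeasureTheory.dirac_eq_dirac_iff_forall_mem_iff_mem.mp h
      {x} (measurableSet_singleton x)).mp rfl)
  · rw [hWright, hdset]; simp [edist_comm]
  · rw [hWright, hdset]; simp [edist_comm]

end Aux

/-- If `x` is an accumulation point of a metric space `X`, then the reach of
`X` at `x`, for the isometric embedding `x ↦ δ_x` of `X` into its 1-Wasserstein space, is zero:
for every `ε > 0` there is a probability measure `μ` with finite first moment, with
`W₁(δ_x, μ) < ε`, admitting at least two distinct nearest Dirac measures. -/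
theorem reach_zero_in_W1 {X : Type*} [MetricSpace X] [MeasurableSpace X] [BorelSpace X]
    (x : X) (hx : ∀ ε : ℝ, 0 < ε → ∃ y : X, y ≠ x ∧ dist x y < ε) :
    reachAt (Wp 1) (WSpace X 1) (Diracs X) (Measure.dirac x) = 0 ∧
    ∀ ε : ℝ≥0∞, 0 < ε → ∃ μ ∈ WSpace X 1,
      Wp 1 (Measure.dirac x) μ < ε ∧
      ∃ ν₁ ∈ Diracs X, ∃ ν₂ ∈ Diracs X, ν₁ ≠ ν₂ ∧
        Wp 1 μ ν₁ = distToSet (Wp 1) μ (Diracs X) ∧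
        Wp 1 μ ν₂ = distToSet (Wp 1) μ (Diracs X) := by
  refine ⟨?_, key_reach x hx⟩
  unfold reachAt
  refine le_antisymm (sSup_le fun r hr => ?_) zero_le
  by_contra h
  push_neg at h
  obtain ⟨μ, hμ, hlt, ν₁, hν₁, ν₂, hν₂, hne, he₁, he₂⟩ := key_reach x hx r h
  obtain ⟨a, -, hu⟩ := hr μ hμ hlt
  exact hne ((hu ν₁ ⟨hν₁, he₁⟩).trans (hu ν₂ ⟨hν₂, he₂⟩).symm)
end
end

section
/- Let (X,d) be a geodesic metric space, p > 1, x ≠ y points of X, 0 < λ < 1, and μ = λδ_x + (1−λ)δ_y. Then any point a ∈ X minimizing z ↦ W_p(δ_z, μ) over X lies on a minimizing geodesic from x to y. More precisely, for every a ∈ X not lying on any minimizing geodesic from x to y there exists a point a' on a minimizing geodesic from x to y with W_p(δ_{a'}, μ) < W_p(δ_a, μ). -/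
open MeasureTheory ENNReal Set

noncomputable section

lemma onMinGeodesic_of_dist_add {X : Type*} [MetricSpace X] (hgeo : IsGeodesicSpace X)
    (a x y : X) (h : dist x a + dist a y = dist x y) : OnMinGeodesic a x y := by
  by_cases hax : a = x
  · obtain ⟨γ, hγ⟩ := hgeo x y
    exact ⟨γ, 0, ⟨le_refl 0, zero_le_one⟩, hγ, by rw [hγ.1, hax]⟩
  by_cases hay : a = y
  · obtain ⟨γ, hγ⟩ := hgeo x y
    exact ⟨γ, 1, ⟨zero_le_one, le_refl 1⟩, hγ, by rw [hγ.2.1, hay]⟩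
  set D := dist x y with hD
  have hdx : 0 < dist x a := dist_pos.2 fun h' => hax (h'.symm)
  have hdy : 0 < dist a y := dist_pos.2 hay
  have hDpos : 0 < D := h ▸ add_pos hdx hdy
  set t := dist x a / D with htdef
  have ht0 : 0 < t := div_pos hdx hDpos
  have ht1 : t < 1 := by
    rw [htdef, div_lt_one hDpos]; linarith
  have hdxt : dist x a = t * D := by rw [htdef, div_mul_cancel₀ _ hDpos.ne']
  have hdyt : dist a y = (1 - t) * D := by
    have h' : (1 - t) * D = D - t * D := by ring
    rw [h', ← hdxt]; linarith
  obtain ⟨γ1, hγ1⟩ := hgeo x a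
  obtain ⟨γ2, hγ2⟩ := hgeo a y
  set γ : ℝ → X := fun s => if s ≤ t then γ1 (s / t) else γ2 ((s - t) / (1 - t)) with hγdef
  have h1t : (0:ℝ) < 1 - t := by linarith
  have hfirst : ∀ s, 0 ≤ s → s ≤ t → dist x (γ s) = s * D ∧ dist (γ s) a = (t - s) * D := by
    intro s hs0 hst
    have hmem : s / t ∈ Icc (0:ℝ) 1 := ⟨div_nonneg hs0 ht0.le, (div_le_one ht0).2 hst⟩
    have hγs : γ s = γ1 (s / t) := by simp [hγdef, hst]
    constructor
    · rw [hγs, ← hγ1.1, hγ1.2.2 0 ⟨le_refl 0, zero_le_one⟩ (s/t) hmem, hdxt,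
        abs_of_nonpos (by linarith [hmem.1] : (0:ℝ) - s/t ≤ 0)]
      field_simp; ring
    · rw [hγs, ← hγ1.2.1, hγ1.2.2 (s/t) hmem 1 ⟨zero_le_one, le_refl 1⟩, hdxt,
        abs_of_nonpos (by linarith [hmem.2] : s/t - 1 ≤ 0)]
      field_simp; ring
  have hsecond : ∀ s, t < s → s ≤ 1 →
      dist a (γ s) = (s - t) * D ∧ dist (γ s) y = (1 - s) * D := by
    intro s hts hs1
    have hmem : (s - t) / (1 - t) ∈ Icc (0:ℝ) 1 :=
      ⟨div_nonneg (by linarith) h1t.le, (div_le_one h1t).2 (by linarith)⟩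
    have hγs : γ s = γ2 ((s - t) / (1 - t)) := by simp [hγdef, not_le.2 hts]
    constructor
    · rw [hγs, ← hγ2.1, hγ2.2.2 0 ⟨le_refl 0, zero_le_one⟩ _ hmem, hdyt,
        abs_of_nonpos (by linarith [hmem.1] : (0:ℝ) - (s-t)/(1-t) ≤ 0)]
      field_simp; ring
    · rw [hγs, ← hγ2.2.1, hγ2.2.2 _ hmem 1 ⟨zero_le_one, le_refl 1⟩, hdyt,
        abs_of_nonpos (by linarith [hmem.2] : (s-t)/(1-t) - 1 ≤ 0)]
      field_simp; ring
  have hγt : γ t = a := by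
    have h0 := (hfirst t ht0.le le_rfl).2
    simp only [sub_self, zero_mul] at h0
    exact dist_eq_zero.1 h0
  have H : ∀ s ∈ Icc (0:ℝ) 1, ∀ u ∈ Icc (0:ℝ) 1, s ≤ u →
      dist (γ s) (γ u) = (u - s) * D := by
    intro s hs u hu hsu
    rcases le_or_gt u t with hut | htu
    · have hmems : s / t ∈ Icc (0:ℝ) 1 :=
        ⟨div_nonneg hs.1 ht0.le, (div_le_one ht0).2 (hsu.trans hut)⟩
      have hmemu : u / t ∈ Icc (0:ℝ) 1 := ⟨div_nonneg hu.1 ht0.le, (div_le_one ht0).2 hut⟩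
      have hγs : γ s = γ1 (s / t) := by simp [hγdef, hsu.trans hut]
      have hγu : γ u = γ1 (u / t) := by simp [hγdef, hut]
      rw [hγs, hγu, hγ1.2.2 _ hmems _ hmemu, hdxt,
        abs_of_nonpos (by rw [sub_nonpos]; exact (div_le_div_iff_of_pos_right ht0).2 hsu)]
      field_simp; ring
    rcases le_or_gt s t with hst | hts
    · refine le_antisymm ?_ ?_
      · have htri := dist_triangle (γ s) a (γ u)
        rw [(hfirst s hs.1 hst).2, (hsecond u htu hu.2).1] at htri
        have : dist a (γ u) = dist (γ u) a := dist_comm _ _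
        linarith [htri]
      · have htri := dist_triangle4 x (γ s) (γ u) y
        rw [(hfirst s hs.1 hst).1, (hsecond u htu hu.2).2] at htri
        rw [← hD] at htri
        linarith
    · have hmems : (s - t) / (1 - t) ∈ Icc (0:ℝ) 1 :=
        ⟨div_nonneg (by linarith) h1t.le, (div_le_one h1t).2 (by linarith [hs.2])⟩
      have hmemu : (u - t) / (1 - t) ∈ Icc (0:ℝ) 1 :=
        ⟨div_nonneg (by linarith) h1t.le, (div_le_one h1t).2 (by linarith [hu.2])⟩
      have hγs : γ s = γ2 ((s - t) / (1 - t)) := by simp [hγdef, not_le.2 hts]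
      have hγu : γ u = γ2 ((u - t) / (1 - t)) := by simp [hγdef, not_le.2 htu]
      rw [hγs, hγu, hγ2.2.2 _ hmems _ hmemu, hdyt,
        abs_of_nonpos (by rw [sub_nonpos]; exact (div_le_div_iff_of_pos_right h1t).2 (by linarith))]
      field_simp; ring
  refine ⟨γ, t, ⟨ht0.le, ht1.le⟩, ⟨?_, ?_, ?_⟩, hγt⟩
  · have := (hfirst 0 le_rfl ht0.le).1
    simp only [zero_mul] at this
    exact (dist_eq_zero.1 this).symm
  · have := (hsecond 1 ht1 le_rfl).2
    simp only [sub_self, zero_mul] at this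
    exact dist_eq_zero.1 this
  · intro s hs u hu
    rcases le_total s u with hsu | hus
    · rw [H s hs u hu hsu, abs_of_nonpos (by linarith)]; ring
    · rw [dist_comm, H u hu s hs hus, abs_of_nonneg (by linarith)]

lemma wp_dirac_eq {X : Type*} [MetricSpace X] [MeasurableSpace X] [BorelSpace X]
    (p l : ℝ) (hl0 : 0 ≤ l) (hl1 : l ≤ 1) (x y b : X) :
    Wp p (Measure.dirac b)
      (ENNReal.ofReal l • Measure.dirac x + ENNReal.ofReal (1 - l) • Measure.dirac y)
      = (ENNReal.ofReal l * edist b x ^ p + ENNReal.ofReal (1 - l) * edist b y ^ p) ^ (1/p) := by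
  set μ : Measure X := ENNReal.ofReal l • Measure.dirac x + ENNReal.ofReal (1 - l) • Measure.dirac y with hμdef
  have hμuniv : μ Set.univ = 1 := by
    simp [hμdef, ← ENNReal.ofReal_add hl0 (by linarith : (0:ℝ) ≤ 1 - l)]
  haveI : IsProbabilityMeasure μ := ⟨hμuniv⟩
  have hg : Measurable fun w : X => edist b w ^ p :=
    (ENNReal.continuous_rpow_const.comp (continuous_const.edist continuous_id)).measurable
  have hval : ∀ π ∈ Couplings (Measure.dirac b) μ,
      ∫⁻ z : X × X, edist z.1 z.2 ^ p ∂π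
        = ENNReal.ofReal l * edist b x ^ p + ENNReal.ofReal (1 - l) * edist b y ^ p := by
    rintro π ⟨h1, h2⟩
    have hae : ∀ᵐ z ∂π, z.1 = b := by
      rw [ae_iff]
      have hset : {z : X × X | ¬ z.1 = b} = Prod.fst ⁻¹' {b}ᶜ := by ext z; simp
      rw [hset, ← Measure.map_apply measurable_fst (measurableSet_singleton b).compl, h1]
      simp
    calc ∫⁻ z : X × X, edist z.1 z.2 ^ p ∂π
        = ∫⁻ z : X × X, edist b z.2 ^ p ∂π :=
          lintegral_congr_ae (hae.mono fun z hz => by simp only [hz])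
      _ = ∫⁻ w, edist b w ^ p ∂(π.map Prod.snd) := (lintegral_map hg measurable_snd).symm
      _ = ∫⁻ w, edist b w ^ p ∂μ := by rw [h2]
      _ = ENNReal.ofReal l * edist b x ^ p + ENNReal.ofReal (1 - l) * edist b y ^ p := by
          simp [hμdef, lintegral_add_measure, lintegral_smul_measure, lintegral_dirac]
  have hmem : (Measure.dirac b).prod μ ∈ Couplings (Measure.dirac b) μ := by
    constructor
    · rw [Measure.map_fst_prod, hμuniv, one_smul]
    · rw [Measure.map_snd_prod]; simp
  unfold Wp
  congr 1
  apply le_antisymm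
  · exact (iInf₂_le _ hmem).trans_eq (hval _ hmem)
  · exact le_iInf₂ fun π hπ => (hval π hπ).ge


/-- Let `X` be a geodesic metric space, `p > 1`, `x ≠ y`, `0 < λ < 1` and
`μ = λ δ_x + (1-λ) δ_y`.  Any point `a` minimizing `z ↦ W_p(δ_z, μ)` lies on a minimizing
geodesic from `x` to `y`; more precisely, for every `a` not on any minimizing geodesic from
`x` to `y` there is `a'` on a minimizing geodesic from `x` to `y` with
`W_p(δ_{a'}, μ) < W_p(δ_a, μ)`. -/
theorem Wp_minimizers_lie_on_geodesics {X : Type*} [MetricSpace X] [MeasurableSpace X]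
    [BorelSpace X] (hgeo : IsGeodesicSpace X) (p : ℝ) (hp : 1 < p)
    (x y : X) (hxy : x ≠ y) (l : ℝ) (hl0 : 0 < l) (hl1 : l < 1)
    (μ : Measure X)
    (hμ : μ = ENNReal.ofReal l • Measure.dirac x + ENNReal.ofReal (1 - l) • Measure.dirac y) :
    (∀ a : X, (∀ b : X, Wp p (Measure.dirac a) μ ≤ Wp p (Measure.dirac b) μ) →
        OnMinGeodesic a x y) ∧
    (∀ a : X, ¬ OnMinGeodesic a x y → ∃ a' : X, OnMinGeodesic a' x y ∧
        Wp p (Measure.dirac a') μ < Wp p (Measure.dirac a) μ) := by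
  have hp0 : (0:ℝ) < p := lt_trans one_pos hp
  set creal : X → ℝ := fun b => l * dist b x ^ p + (1 - l) * dist b y ^ p with hcreal
  have hcnonneg : ∀ b, 0 ≤ creal b := by
    intro b
    have := Real.rpow_nonneg (dist_nonneg (x := b) (y := x)) p
    have := Real.rpow_nonneg (dist_nonneg (x := b) (y := y)) p
    have h1 : (0:ℝ) ≤ 1 - l := by linarith
    rw [hcreal]
    exact add_nonneg (mul_nonneg hl0.le (Real.rpow_nonneg dist_nonneg p))
      (mul_nonneg h1 (Real.rpow_nonneg dist_nonneg p))
  have hW : ∀ b : X, Wp p (Measure.dirac b) μ = ENNReal.ofReal (creal b) ^ (1/p) := by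
    intro b
    rw [hμ, wp_dirac_eq p l hl0.le hl1.le x y b]
    congr 1
    rw [edist_dist, edist_dist,
      ENNReal.ofReal_rpow_of_nonneg dist_nonneg hp0.le,
      ENNReal.ofReal_rpow_of_nonneg dist_nonneg hp0.le,
      ← ENNReal.ofReal_mul hl0.le, ← ENNReal.ofReal_mul (by linarith : (0:ℝ) ≤ 1 - l),
      ← ENNReal.ofReal_add (mul_nonneg hl0.le (Real.rpow_nonneg dist_nonneg p))
        (mul_nonneg (by linarith : (0:ℝ) ≤ 1 - l) (Real.rpow_nonneg dist_nonneg p))]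
  have hmain : ∀ a : X, ¬ OnMinGeodesic a x y → ∃ a' : X, OnMinGeodesic a' x y ∧
      creal a' < creal a := by
    intro a ha
    set D := dist x y with hD
    have hDpos : 0 < D := dist_pos.2 hxy
    have hax : a ≠ x := by
      rintro rfl
      obtain ⟨γ, hγ⟩ := hgeo a y
      exact ha ⟨γ, 0, ⟨le_refl 0, zero_le_one⟩, hγ, hγ.1⟩
    have hay : a ≠ y := by
      rintro rfl
      obtain ⟨γ, hγ⟩ := hgeo x a
      exact ha ⟨γ, 1, ⟨zero_le_one, le_refl 1⟩, hγ, hγ.2.1⟩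
    have hdx : 0 < dist a x := dist_pos.2 hax
    have hdy : 0 < dist a y := dist_pos.2 hay
    have hsum : D < dist a x + dist a y := by
      rcases lt_or_eq_of_le (dist_triangle x a y) with h' | h'
      · rw [dist_comm x a] at h'; exact h'
      · exact absurd (onMinGeodesic_of_dist_add hgeo a x y h'.symm) ha
    obtain ⟨γ, hγ⟩ := hgeo x y
    by_cases hcx : D ≤ dist a x
    · refine ⟨y, ⟨γ, 1, ⟨zero_le_one, le_refl 1⟩, hγ, hγ.2.1⟩, ?_⟩
      have hyx : dist y x = D := dist_comm y x
      have h0 : dist y y = 0 := dist_self y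
      rw [hcreal]
      simp only [hyx, h0]
      rw [Real.zero_rpow hp0.ne']
      have h1 : D ^ p ≤ dist a x ^ p := Real.rpow_le_rpow hDpos.le hcx hp0.le
      have h2 : 0 < (1 - l) * dist a y ^ p :=
        mul_pos (by linarith) (Real.rpow_pos_of_pos hdy p)
      nlinarith [mul_le_mul_of_nonneg_left h1 hl0.le]
    by_cases hcy : D ≤ dist a y
    · refine ⟨x, ⟨γ, 0, ⟨le_refl 0, zero_le_one⟩, hγ, hγ.1⟩, ?_⟩
      rw [hcreal]
      simp only [dist_self]
      rw [Real.zero_rpow hp0.ne']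
      have h1 : D ^ p ≤ dist a y ^ p := Real.rpow_le_rpow hDpos.le hcy hp0.le
      have h2 : 0 < l * dist a x ^ p := mul_pos hl0 (Real.rpow_pos_of_pos hdx p)
      nlinarith [mul_le_mul_of_nonneg_left h1 (by linarith : (0:ℝ) ≤ 1 - l)]
    push_neg at hcx hcy
    set t := dist a x / D with ht
    have ht0 : 0 < t := div_pos hdx hDpos
    have ht1 : t ≤ 1 := (div_le_one hDpos).2 hcx.le
    have htD : t * D = dist a x := div_mul_cancel₀ _ hDpos.ne'
    refine ⟨γ t, ⟨γ, t, ⟨ht0.le, ht1⟩, hγ, rfl⟩, ?_⟩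
    have hd1 : dist (γ t) x = dist a x := by
      have h' := hγ.2.2 t ⟨ht0.le, ht1⟩ 0 ⟨le_refl 0, zero_le_one⟩
      rw [hγ.1, sub_zero, abs_of_nonneg ht0.le, ← hD, htD] at h'
      exact h'
    have hd2 : dist (γ t) y = D - dist a x := by
      have h' := hγ.2.2 t ⟨ht0.le, ht1⟩ 1 ⟨zero_le_one, le_refl 1⟩
      rw [hγ.2.1, abs_of_nonpos (by linarith : t - 1 ≤ 0), ← hD] at h'
      rw [h', ← htD]; ring
    rw [hcreal]
    simp only [hd1, hd2]
    have hlt : (D - dist a x) ^ p < dist a y ^ p :=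
      Real.rpow_lt_rpow (by linarith) (by linarith) hp0
    have := mul_lt_mul_of_pos_left hlt (by linarith : (0:ℝ) < 1 - l)
    linarith
  constructor
  · intro a hmin
    by_contra hnot
    obtain ⟨a', _, hlt⟩ := hmain a hnot
    have hWlt : Wp p (Measure.dirac a') μ < Wp p (Measure.dirac a) μ := by
      rw [hW, hW]
      exact ENNReal.rpow_lt_rpow
        ((ENNReal.ofReal_lt_ofReal_iff_of_nonneg (hcnonneg a')).2 hlt) (by positivity)
    exact absurd (hmin a') (not_le.2 hWlt)
  · intro a hnot
    obtain ⟨a', hon, hlt⟩ := hmain a hnot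
    refine ⟨a', hon, ?_⟩
    rw [hW, hW]
    exact ENNReal.rpow_lt_rpow
      ((ENNReal.ofReal_lt_ofReal_iff_of_nonneg (hcnonneg a')).2 hlt) (by positivity)
end
end

section
/- Let (X,d) be a reflexive metric space admitting midpoints that is Busemann, strictly p-convex for some p ∈ [1,∞], and uniformly q-convex for some q ∈ [1,∞]. Then for every r > 1, every measure μ ∈ W_r(X) has a unique nearest Dirac measure, i.e. reach({δ_z : z ∈ X} ⊆ W_r(X)) = ∞. -/
open MeasureTheory ENNReal Set

noncomputable section

/-- `m` is a midpoint of `x` and `y`. -/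
def IsMidpoint {X : Type*} [PseudoMetricSpace X] (x y m : X) : Prop :=
  dist x m = dist x y / 2 ∧ dist y m = dist x y / 2

/-- `X` admits midpoints. -/
def MidpointSpace (X : Type*) [PseudoMetricSpace X] : Prop :=
  ∀ x y : X, ∃ m : X, IsMidpoint x y m

/-- `X` is `p`-convex (`p ∈ [1,∞)`). -/
def PConvex (X : Type*) [PseudoMetricSpace X] (p : ℝ) : Prop :=
  ∀ x y z m : X, IsMidpoint x y m →
    dist m z ≤ (dist x z ^ p / 2 + dist y z ^ p / 2) ^ (1 / p)

/-- `X` is strictly `p`-convex (`p ∈ [1,∞)`): the `p`-convexity inequality is strict for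
`x ≠ y` when `p > 1`, and strict whenever `d(x,y) > |d(x,z) - d(y,z)|` when `p = 1`. -/
def StrictlyPConvex (X : Type*) [PseudoMetricSpace X] (p : ℝ) : Prop :=
  PConvex X p ∧
    ∀ x y z m : X, IsMidpoint x y m →
      ((p ≠ 1 ∧ x ≠ y) ∨ (p = 1 ∧ |dist x z - dist y z| < dist x y)) →
      dist m z < (dist x z ^ p / 2 + dist y z ^ p / 2) ^ (1 / p)

/-- `X` is `∞`-convex. -/
def InftyConvex (X : Type*) [PseudoMetricSpace X] : Prop :=
  ∀ x y z m : X, IsMidpoint x y m → dist m z ≤ max (dist x z) (dist y z)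

/-- `X` is strictly `∞`-convex. -/
def StrictlyInftyConvex (X : Type*) [PseudoMetricSpace X] : Prop :=
  InftyConvex X ∧
    ∀ x y z m : X, IsMidpoint x y m → x ≠ y →
      dist m z < max (dist x z) (dist y z)

/-- `X` is uniformly `p`-convex (`p ∈ [1,∞)`). -/
def UniformlyPConvex (X : Type*) [PseudoMetricSpace X] (p : ℝ) : Prop :=
  PConvex X p ∧
    ∀ ε : ℝ, 0 < ε → ∃ ρ : ℝ, ρ ∈ Set.Ioo (0:ℝ) 1 ∧
      ∀ x y z m : X, IsMidpoint x y m →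
        ((p ≠ 1 ∧ ε * (dist x z ^ p / 2 + dist y z ^ p / 2) ^ (1 / p) < dist x y) ∨
          (p = 1 ∧
            |dist x z - dist y z| + ε * (dist x z / 2 + dist y z / 2) < dist x y)) →
        dist m z ≤ (1 - ρ) * (dist x z ^ p / 2 + dist y z ^ p / 2) ^ (1 / p)

/-- `X` is uniformly `∞`-convex. -/
def UniformlyInftyConvex (X : Type*) [PseudoMetricSpace X] : Prop :=
  InftyConvex X ∧
    ∀ ε : ℝ, 0 < ε → ∃ ρ : ℝ, ρ ∈ Set.Ioo (0:ℝ) 1 ∧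
      ∀ x y z m : X, IsMidpoint x y m →
        ε * max (dist x z) (dist y z) < dist x y →
        dist m z ≤ (1 - ρ) * max (dist x z) (dist y z)

/-- `X` is Busemann. -/
def Busemann (X : Type*) [PseudoMetricSpace X] : Prop :=
  ∀ x₀ x₁ y₀ y₁ mx my : X, IsMidpoint x₀ x₁ mx → IsMidpoint y₀ y₁ my →
    dist mx my ≤ dist x₀ y₀ / 2 + dist x₁ y₁ / 2

/-- A subset `C` of a metric space is (metrically) convex: it contains every midpoint of any
two of its points. -/
def MConvexSet {X : Type*} [PseudoMetricSpace X] (C : Set X) : Prop :=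
  ∀ x ∈ C, ∀ y ∈ C, ∀ m : X, IsMidpoint x y m → m ∈ C

/-- `X` is reflexive: every directed non-increasing family of nonempty bounded closed convex
subsets has nonempty intersection. -/
def ReflexiveSpace (X : Type*) [PseudoMetricSpace X] : Prop :=
  ∀ (I : Type) [Preorder I] [Nonempty I], IsDirected I (· ≤ ·) →
    ∀ C : I → Set X,
      (∀ i : I, (C i).Nonempty ∧ Bornology.IsBounded (C i) ∧ IsClosed (C i) ∧
        MConvexSet (C i)) →
      (∀ i j : I, i ≤ j → C j ⊆ C i) →
      (⋂ i : I, C i).Nonempty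
set_option linter.unusedSectionVars false

namespace ReachAux

variable {X : Type*} [MetricSpace X] [MeasurableSpace X] [BorelSpace X]

/-- the r-cost of transporting μ to the Dirac at z, as the r-th root. -/
def gd (μ : Measure X) (r : ℝ) (z : X) : ℝ≥0∞ :=
  (∫⁻ x, edist x z ^ r ∂μ) ^ (1 / r)

lemma meas_edist_rpow (z : X) (r : ℝ) : Measurable fun x : X => edist x z ^ r :=
  ((continuous_id.edist continuous_const).measurable).pow_const r

lemma gd_rpow (μ : Measure X) {r : ℝ} (hr : 0 < r) (z : X) :
    gd μ r z ^ r = ∫⁻ x, edist x z ^ r ∂μ := by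
  rw [gd, ← ENNReal.rpow_mul, one_div, inv_mul_cancel₀ hr.ne', ENNReal.rpow_one]

lemma halfpow (μ : Measure X) {r : ℝ} (hr : 0 < r) (f : X → ℝ≥0∞) :
    (∫⁻ x, (f x / 2) ^ r ∂μ) ^ (1 / r) = (∫⁻ x, f x ^ r ∂μ) ^ (1 / r) / 2 := by
  have h2 : ((2:ℝ≥0∞) ^ r) ^ (1/r) = 2 := by
    rw [← ENNReal.rpow_mul, mul_one_div_cancel hr.ne', ENNReal.rpow_one]
  have hne : ((2:ℝ≥0∞) ^ r)⁻¹ ≠ ⊤ := by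
    simp [ENNReal.rpow_eq_zero_iff]
  simp_rw [ENNReal.div_rpow_of_nonneg _ _ hr.le, div_eq_mul_inv]
  rw [lintegral_mul_const' _ _ hne,
    ENNReal.mul_rpow_of_nonneg _ _ (by positivity : (0:ℝ) ≤ 1*r⁻¹), ENNReal.inv_rpow,
    show (1:ℝ)*r⁻¹ = 1/r by ring, h2]

/-- 1-Lipschitz property of `gd` in `z`. -/
lemma gd_le_add (μ : Measure X) [IsProbabilityMeasure μ] {r : ℝ} (hr : 1 ≤ r)
    (z z' : X) : gd μ r z ≤ gd μ r z' + edist z' z := by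
  have hr0 : (0:ℝ) < r := lt_of_lt_of_le one_pos hr
  set c := edist z' z with hc
  have h1 : gd μ r z ≤ (∫⁻ x, (edist x z' + c) ^ r ∂μ) ^ (1/r) := by
    refine ENNReal.rpow_le_rpow (lintegral_mono fun x => ?_) (by positivity)
    exact ENNReal.rpow_le_rpow (by simpa using edist_triangle x z' z) hr0.le
  refine h1.trans ?_
  have h2 := ENNReal.lintegral_Lp_add_le (μ := μ) (f := fun x => edist x z')
    (g := fun _ => c)
    ((continuous_id.edist continuous_const).measurable.aemeasurable)
    (aemeasurable_const (b := c)) hr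
  simp only [Pi.add_apply] at h2
  refine h2.trans ?_
  have h3 : (∫⁻ _ : X, c ^ r ∂μ) ^ (1/r) = c := by
    rw [lintegral_const, measure_univ, mul_one, ← ENNReal.rpow_mul,
      mul_one_div_cancel hr0.ne', ENNReal.rpow_one]
  rw [h3]
  exact add_le_add_left (le_of_eq rfl) c

lemma edist_mid (hbus : Busemann X) {z₀ z₁ m : X} (hm : IsMidpoint z₀ z₁ m) (x : X) :
    edist x m ≤ (edist x z₀ + edist x z₁) / 2 := by
  have hb := hbus z₀ z₁ x x m x hm ⟨by simp [IsMidpoint], by simp [IsMidpoint]⟩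
  calc edist x m = ENNReal.ofReal (dist x m) := edist_dist x m
    _ ≤ ENNReal.ofReal ((dist x z₀ + dist x z₁) / 2) := by
        refine ENNReal.ofReal_le_ofReal ?_
        rw [dist_comm x m, dist_comm x z₀, dist_comm x z₁]; linarith
    _ = (edist x z₀ + edist x z₁) / 2 := by
        rw [ENNReal.ofReal_div_of_pos two_pos,
          ENNReal.ofReal_add dist_nonneg dist_nonneg, edist_dist, edist_dist,
          ENNReal.ofReal_ofNat]

lemma gd_mid_le (μ : Measure X) [IsProbabilityMeasure μ] {r : ℝ} (hr : 1 ≤ r)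
    (hbus : Busemann X) {z₀ z₁ m : X} (hm : IsMidpoint z₀ z₁ m) :
    gd μ r m ≤ (∫⁻ x, ((edist x z₀ + edist x z₁) / 2) ^ r ∂μ) ^ (1/r) := by
  have hr0 : (0:ℝ) < r := lt_of_lt_of_le one_pos hr
  exact ENNReal.rpow_le_rpow (lintegral_mono fun x =>
    ENNReal.rpow_le_rpow (edist_mid hbus hm x) hr0.le) (by positivity)

lemma mid_int_le (μ : Measure X) [IsProbabilityMeasure μ] {r : ℝ} (hr : 1 ≤ r)
    (z₀ z₁ : X) :
    (∫⁻ x, ((edist x z₀ + edist x z₁) / 2) ^ r ∂μ) ^ (1/r) ≤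
      gd μ r z₀ / 2 + gd μ r z₁ / 2 := by
  have hr0 : (0:ℝ) < r := lt_of_lt_of_le one_pos hr
  have hmeas₀ : AEMeasurable (fun x : X => edist x z₀ / 2) μ :=
    ((continuous_id.edist continuous_const).measurable.div_const 2).aemeasurable
  have hmeas₁ : AEMeasurable (fun x : X => edist x z₁ / 2) μ :=
    ((continuous_id.edist continuous_const).measurable.div_const 2).aemeasurable
  have h2 := ENNReal.lintegral_Lp_add_le (f := fun x => edist x z₀ / 2)
    (g := fun x => edist x z₁ / 2) hmeas₀ hmeas₁ hr
  simp only [Pi.add_apply] at h2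
  simp_rw [ENNReal.add_div]
  refine h2.trans ?_
  rw [halfpow μ hr0, halfpow μ hr0]
  exact le_rfl

/-- Existence of a minimizer of `gd` via reflexivity. -/
lemma exists_min (μ : Measure X) [IsProbabilityMeasure μ] {r : ℝ} (hr : 1 ≤ r)
    (hrefl : ReflexiveSpace X) (hbus : Busemann X) {x₀ : X}
    (hfin : ∫⁻ x, edist x x₀ ^ r ∂μ ≠ ⊤) :
    ∃ z, gd μ r z = ⨅ w, gd μ r w := by
  have hr0 : (0:ℝ) < r := lt_of_lt_of_le one_pos hr
  have hgtop : gd μ r x₀ ≠ ⊤ :=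
    ENNReal.rpow_ne_top_of_nonneg (by positivity) hfin
  have hmtop : (⨅ w, gd μ r w) ≠ ⊤ :=
    ne_top_of_le_ne_top hgtop (iInf_le _ x₀)
  obtain ⟨N, hN⟩ : ∃ N : ℕ, (1/2 : ℝ≥0∞) < μ (Metric.closedBall x₀ N) := by
    have hmono : Monotone fun n : ℕ => Metric.closedBall x₀ (n:ℝ) := fun a b hab =>
      Metric.closedBall_subset_closedBall (by exact_mod_cast hab)
    have hunion : ⋃ n : ℕ, Metric.closedBall x₀ (n:ℝ) = Set.univ := by
      ext x; simp only [Set.mem_iUnion, Set.mem_univ, iff_true]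
      obtain ⟨n, hn⟩ := exists_nat_ge (dist x x₀)
      exact ⟨n, Metric.mem_closedBall.2 hn⟩
    have ht := tendsto_measure_iUnion_atTop (μ := μ)
      (s := fun n : ℕ => Metric.closedBall x₀ (n:ℝ)) hmono
    rw [hunion, measure_univ] at ht
    exact (ht.eventually (eventually_gt_nhds (by norm_num))).exists
  set C : ℕ → Set X := fun n => {z | gd μ r z ≤ (⨅ w, gd μ r w) + ((n:ℝ≥0∞)+1)⁻¹}
    with hC
  have hprop : ∀ n, (C n).Nonempty ∧ Bornology.IsBounded (C n) ∧ IsClosed (C n) ∧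
      MConvexSet (C n) := by
    intro n
    set b := (⨅ w, gd μ r w) + ((n:ℝ≥0∞)+1)⁻¹ with hb
    have hbtop : b ≠ ⊤ := ENNReal.add_ne_top.2 ⟨hmtop, by simp⟩
    refine ⟨?_, ?_, ?_, ?_⟩
    · have hlt : (⨅ w, gd μ r w) < b :=
        ENNReal.lt_add_right hmtop (by simp)
      obtain ⟨z, hz⟩ := iInf_lt_iff.mp hlt
      exact ⟨z, hz.le⟩
    · set B := (b ^ r * 2) ^ (1/r) with hB
      have hBtop : B ≠ ⊤ := ENNReal.rpow_ne_top_of_nonneg (by positivity)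
        (ENNReal.mul_ne_top (ENNReal.rpow_ne_top_of_nonneg hr0.le hbtop) (by norm_num))
      refine (Metric.isBounded_closedBall
        (x := x₀) (r := max (2*(N:ℝ)) (2*B.toReal))).subset ?_
      intro z hz
      simp only [Metric.mem_closedBall]
      rcases le_or_gt (dist z x₀) (2*(N:ℝ)) with h | h
      · exact h.trans (le_max_left _ _)
      · refine le_trans ?_ (le_max_right _ _)
        set D := dist z x₀ with hD
        have hpoint : ∀ x ∈ Metric.closedBall x₀ (N:ℝ),
            ENNReal.ofReal (D/2) ≤ edist x z := by
          intro x hx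
          rw [edist_dist]
          refine ENNReal.ofReal_le_ofReal ?_
          have h1 : dist x x₀ ≤ (N:ℝ) := Metric.mem_closedBall.1 hx
          have h2 : D ≤ dist x z + dist x x₀ := by
            calc D = dist z x₀ := rfl
              _ ≤ dist z x + dist x x₀ := dist_triangle _ _ _
              _ = dist x z + dist x x₀ := by rw [dist_comm]
          linarith
        set c := ENNReal.ofReal (D/2) ^ r with hcdef
        have hind : ∫⁻ x, (Metric.closedBall x₀ (N:ℝ)).indicator (fun _ => c) x ∂μ ≤
            ∫⁻ x, edist x z ^ r ∂μ := by
          refine lintegral_mono fun x => ?_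
          by_cases hx : x ∈ Metric.closedBall x₀ (N:ℝ)
          · rw [Set.indicator_of_mem hx]
            exact ENNReal.rpow_le_rpow (hpoint x hx) hr0.le
          · rw [Set.indicator_of_notMem hx]; exact zero_le
        rw [lintegral_indicator measurableSet_closedBall, setLIntegral_const] at hind
        have hint_le : ∫⁻ x, edist x z ^ r ∂μ ≤ b ^ r := by
          have h5 := ENNReal.rpow_le_rpow hz hr0.le
          rwa [gd_rpow μ hr0 z] at h5
        have hc2 : c * (1/2) ≤ b ^ r :=
          (mul_le_mul_right hN.le c).trans (hind.trans hint_le)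
        have hcB : ENNReal.ofReal (D/2) ≤ B := by
          have hcc : c * (1/2) * 2 = c := by
            rw [one_div, mul_assoc, ENNReal.inv_mul_cancel (by norm_num) (by norm_num),
              mul_one]
          have h4 : c ≤ b ^ r * 2 := by
            calc c = c * (1/2) * 2 := hcc.symm
              _ ≤ b ^ r * 2 := mul_le_mul_left hc2 2
          have h6 := ENNReal.rpow_le_rpow h4 (by positivity : (0:ℝ) ≤ 1/r)
          rwa [hcdef, ← ENNReal.rpow_mul, mul_one_div_cancel hr0.ne',
            ENNReal.rpow_one] at h6
        have h7 := (ENNReal.ofReal_le_iff_le_toReal hBtop).1 hcB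
        linarith
    · refine isClosed_of_closure_subset fun z hz => ?_
      show gd μ r z ≤ b
      refine ENNReal.le_of_forall_pos_le_add fun ε hε _ => ?_
      obtain ⟨z', hz', hzz'⟩ := EMetric.mem_closure_iff.1 hz (ε:ℝ≥0∞)
        (by exact_mod_cast hε)
      calc gd μ r z ≤ gd μ r z' + edist z' z := gd_le_add μ hr z z'
        _ ≤ b + ε := add_le_add hz' (by rw [edist_comm]; exact hzz'.le)
    · intro z₀ hz₀ z₁ hz₁ mm hmm
      show gd μ r mm ≤ b
      refine (gd_mid_le μ hr hbus hmm).trans ((mid_int_le μ hr z₀ z₁).trans ?_)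
      calc gd μ r z₀ / 2 + gd μ r z₁ / 2 ≤ b/2 + b/2 := by
            exact add_le_add (ENNReal.div_le_div_right hz₀ 2) (ENNReal.div_le_div_right hz₁ 2)
        _ = b := ENNReal.add_halves b
  have hmono : ∀ i j : ℕ, i ≤ j → C j ⊆ C i := by
    intro i j hij z hz
    have h' : ((j:ℝ≥0∞)+1)⁻¹ ≤ ((i:ℝ≥0∞)+1)⁻¹ := by
      refine ENNReal.inv_le_inv.2 (add_le_add_left ?_ 1)
      exact_mod_cast hij
    exact le_trans hz (add_le_add_right h' _)
  have hd : IsDirected ℕ (· ≤ ·) := inferInstance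
  obtain ⟨z, hz⟩ := hrefl ℕ hd C hprop hmono
  refine ⟨z, le_antisymm ?_ (iInf_le _ z)⟩
  refine ENNReal.le_of_forall_pos_le_add fun ε hε _ => ?_
  obtain ⟨n, hn⟩ := ENNReal.exists_inv_nat_lt
    (show ((ε:ℝ≥0∞)) ≠ 0 by exact_mod_cast hε.ne')
  have h1 : gd μ r z ≤ (⨅ w, gd μ r w) + ((n:ℝ≥0∞)+1)⁻¹ := Set.mem_iInter.1 hz n
  refine h1.trans (add_le_add_right ?_ _)
  calc ((n:ℝ≥0∞)+1)⁻¹ ≤ ((n:ℝ≥0∞))⁻¹ := ENNReal.inv_le_inv.2 le_self_add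
    _ ≤ ε := hn.le

lemma lintegral_half (μ : Measure X) (f : X → ℝ≥0∞) :
    ∫⁻ x, f x / 2 ∂μ = (∫⁻ x, f x ∂μ) / 2 := by
  simp_rw [div_eq_mul_inv]
  rw [lintegral_mul_const' _ _ (by simp)]

lemma ae_eq_of_le_int (μ : Measure X) {h₁ h₂ : X → ℝ≥0∞} (hm1 : Measurable h₁)
    (hm2 : Measurable h₂) (hle : ∀ x, h₁ x ≤ h₂ x) (hfin : ∫⁻ x, h₁ x ∂μ ≠ ⊤)
    (hint : ∫⁻ x, h₂ x ∂μ ≤ ∫⁻ x, h₁ x ∂μ) : h₂ =ᵐ[μ] h₁ := by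
  have hsub : ∫⁻ x, h₂ x - h₁ x ∂μ = 0 := by
    rw [lintegral_sub hm1 hfin (Filter.Eventually.of_forall hle)]
    exact tsub_eq_zero_of_le hint
  have h := (lintegral_eq_zero_iff (hm2.sub hm1)).1 hsub
  filter_upwards [h] with x hx
  exact le_antisymm (tsub_eq_zero_iff_le.1 hx) (hle x)

/-- Uniqueness of the minimizer of `gd`. -/
lemma unique_min (μ : Measure X) [IsProbabilityMeasure μ] {r : ℝ} (hr : 1 < r)
    (hmid : MidpointSpace X) (hbus : Busemann X)
    (hstrict : (∃ p : ℝ, 1 ≤ p ∧ StrictlyPConvex X p) ∨ StrictlyInftyConvex X)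
    {x₀ : X} (hfin : ∫⁻ x, edist x x₀ ^ r ∂μ ≠ ⊤)
    {z₀ z₁ : X} (h₀ : gd μ r z₀ = ⨅ w, gd μ r w) (h₁ : gd μ r z₁ = ⨅ w, gd μ r w) :
    z₀ = z₁ := by
  by_contra hne
  have hr0 : (0:ℝ) < r := lt_trans one_pos hr
  set m' := ⨅ w, gd μ r w with hm'
  have hmtop : m' ≠ ⊤ := ne_top_of_le_ne_top
    (ENNReal.rpow_ne_top_of_nonneg (by positivity) hfin) (iInf_le _ x₀)
  obtain ⟨mm, hmm⟩ := hmid z₀ z₁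
  set h0 : X → ℝ≥0∞ := fun x => edist x mm ^ r with hh0
  set g1 : X → ℝ≥0∞ := fun x => ((edist x z₀ + edist x z₁)/2) ^ r with hg1
  set g2 : X → ℝ≥0∞ := fun x => (edist x z₀ ^ r + edist x z₁ ^ r)/2 with hg2
  have i0 : ∫⁻ x, edist x z₀ ^ r ∂μ = m' ^ r := by rw [← gd_rpow μ hr0 z₀, h₀]
  have i1 : ∫⁻ x, edist x z₁ ^ r ∂μ = m' ^ r := by rw [← gd_rpow μ hr0 z₁, h₁]
  have hint2 : ∫⁻ x, g2 x ∂μ = m' ^ r := by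
    calc ∫⁻ x, g2 x ∂μ
        = ∫⁻ x, edist x z₀ ^ r / 2 + edist x z₁ ^ r / 2 ∂μ := by
          simp_rw [hg2, ENNReal.add_div]
      _ = (∫⁻ x, edist x z₀ ^ r ∂μ)/2 + (∫⁻ x, edist x z₁ ^ r ∂μ)/2 := by
          rw [lintegral_add_left ((meas_edist_rpow z₀ r).div_const 2),
            lintegral_half, lintegral_half]
      _ = m' ^ r := by rw [i0, i1, ENNReal.add_halves]
  have hg1_le_g2 : ∀ x, g1 x ≤ g2 x := by
    intro x
    have h := ENNReal.rpow_arith_mean_le_arith_mean2_rpow (1/2) (1/2)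
      (edist x z₀) (edist x z₁) (ENNReal.add_halves 1) hr.le
    simpa [hg1, hg2, div_eq_mul_inv, mul_comm, add_mul] using h
  have hh0_le_g1 : ∀ x, h0 x ≤ g1 x := fun x =>
    ENNReal.rpow_le_rpow (edist_mid hbus hmm x) hr0.le
  have hint1_le : ∫⁻ x, g1 x ∂μ ≤ m' ^ r :=
    le_trans (lintegral_mono hg1_le_g2) (le_of_eq hint2)
  have hint0_ge : m' ^ r ≤ ∫⁻ x, h0 x ∂μ := by
    have h := ENNReal.rpow_le_rpow (iInf_le (fun w => gd μ r w) mm) hr0.le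
    rwa [gd_rpow μ hr0 mm] at h
  have hint0_le : ∫⁻ x, h0 x ∂μ ≤ ∫⁻ x, g1 x ∂μ := lintegral_mono hh0_le_g1
  have e01 : ∫⁻ x, g1 x ∂μ = m' ^ r :=
    le_antisymm hint1_le (le_trans hint0_ge hint0_le)
  have e00 : ∫⁻ x, h0 x ∂μ = m' ^ r :=
    le_antisymm (hint0_le.trans hint1_le) hint0_ge
  have hfin0 : ∫⁻ x, h0 x ∂μ ≠ ⊤ := by
    rw [e00]; exact ENNReal.rpow_ne_top_of_nonneg hr0.le hmtop
  have hm0 : Measurable h0 := meas_edist_rpow mm r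
  have hmg1 : Measurable g1 :=
    ((((continuous_id.edist continuous_const).measurable).add
      ((continuous_id.edist continuous_const).measurable)).div_const 2).pow_const r
  have hmg2 : Measurable g2 :=
    ((meas_edist_rpow z₀ r).add (meas_edist_rpow z₁ r)).div_const 2
  have hae1 : g1 =ᵐ[μ] h0 := ae_eq_of_le_int μ hm0 hmg1 hh0_le_g1 hfin0
    (by rw [e00, e01])
  have hae2 : g2 =ᵐ[μ] g1 := ae_eq_of_le_int μ hmg1 hmg2 hg1_le_g2
    (by rw [e01]; exact ENNReal.rpow_ne_top_of_nonneg hr0.le hmtop)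
    (by rw [e01, hint2])
  haveI : (ae μ).NeBot := ae_neBot.2 (IsProbabilityMeasure.ne_zero μ)
  obtain ⟨x, hx1, hx2⟩ := (hae1.and hae2).exists
  -- convert to real statements
  have ha0 : (0:ℝ) ≤ dist x z₀ := dist_nonneg
  have hb0 : (0:ℝ) ≤ dist x z₁ := dist_nonneg
  have hof : ∀ w : X, edist x w = ENNReal.ofReal (dist x w) := fun w => edist_dist x w
  have hhalf : ∀ u v : ℝ, 0 ≤ u → 0 ≤ v →
      (ENNReal.ofReal u + ENNReal.ofReal v)/2 = ENNReal.ofReal ((u+v)/2) := by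
    intro u v hu hv
    rw [ENNReal.ofReal_div_of_pos two_pos, ENNReal.ofReal_add hu hv, ENNReal.ofReal_ofNat]
  -- real equality from hx2 : g2 x = g1 x
  have hreal2 : (dist x z₀ ^ r + dist x z₁ ^ r)/2 = ((dist x z₀ + dist x z₁)/2) ^ r := by
    have h2' : g2 x = g1 x := hx2
    rw [hg1, hg2] at h2'
    simp only [hof] at h2'
    rw [ENNReal.ofReal_rpow_of_nonneg ha0 hr0.le,
      ENNReal.ofReal_rpow_of_nonneg hb0 hr0.le,
      hhalf _ _ (Real.rpow_nonneg ha0 r) (Real.rpow_nonneg hb0 r),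
      hhalf _ _ ha0 hb0,
      ENNReal.ofReal_rpow_of_nonneg (by positivity) hr0.le] at h2'
    exact (ENNReal.ofReal_eq_ofReal_iff (by positivity) (by positivity)).1 h2'
  -- a = b
  have hab : dist x z₀ = dist x z₁ := by
    by_contra hab
    have hconv := (strictConvexOn_rpow hr).2 (Set.mem_Ici.2 ha0) (Set.mem_Ici.2 hb0)
      hab (by norm_num : (0:ℝ) < 1/2) (by norm_num : (0:ℝ) < 1/2) (by norm_num)
    simp only [smul_eq_mul] at hconv
    have : ((dist x z₀ + dist x z₁)/2 : ℝ) ^ r < (dist x z₀ ^ r + dist x z₁ ^ r)/2 := by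
      have e1 : (1/2) * dist x z₀ + (1/2) * dist x z₁ = (dist x z₀ + dist x z₁)/2 := by ring
      have e2 : (1/2) * dist x z₀ ^ r + (1/2) * dist x z₁ ^ r
          = (dist x z₀ ^ r + dist x z₁ ^ r)/2 := by ring
      rw [e1, e2] at hconv; exact hconv
    linarith [hreal2]
  -- dist x mm = (a+b)/2 = a
  have ham : dist x mm = (dist x z₀ + dist x z₁)/2 := by
    have h1' : g1 x = h0 x := hx1
    rw [hg1, hh0] at h1'
    have hinj := ENNReal.rpow_left_injective hr0.ne' h1'.symm
    rw [hof mm, hof z₀, hof z₁, hhalf _ _ ha0 hb0] at hinj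
    exact (ENNReal.ofReal_eq_ofReal_iff dist_nonneg (by positivity)).1 hinj
  have hxm : dist x mm = dist x z₀ := by rw [ham, ← hab]; ring
  -- strict convexity contradiction
  rcases hstrict with ⟨p, hp1, hpc⟩ | hic
  · rcases eq_or_ne p 1 with hp | hp
    · have hcond : |dist z₀ x - dist z₁ x| < dist z₀ z₁ := by
        rw [dist_comm z₀ x, dist_comm z₁ x, hab]
        simpa using dist_pos.2 hne
      have hlt := hpc.2 z₀ z₁ x mm hmm (Or.inr ⟨hp, hcond⟩)
      rw [hp] at hlt
      simp only [Real.rpow_one, one_div_one] at hlt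
      rw [dist_comm z₀ x, dist_comm z₁ x, hab, dist_comm mm x, hxm, hab] at hlt
      linarith
    · have hlt := hpc.2 z₀ z₁ x mm hmm (Or.inl ⟨hp, hne⟩)
      have hpne : p ≠ 0 := by intro h; rw [h] at hp1; linarith
      rw [dist_comm z₀ x, dist_comm z₁ x, ← hab] at hlt
      have hsimp : ((dist x z₀ ^ p)/2 + (dist x z₀ ^ p)/2 : ℝ) ^ (1/p) = dist x z₀ := by
        rw [show ((dist x z₀ ^ p)/2 + (dist x z₀ ^ p)/2 : ℝ) = dist x z₀ ^ p by ring,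
          ← Real.rpow_mul ha0, mul_one_div_cancel hpne, Real.rpow_one]
      rw [hsimp, dist_comm mm x, hxm] at hlt
      linarith
  · have hlt := hic.2 z₀ z₁ x mm hmm hne
    rw [dist_comm z₀ x, dist_comm z₁ x, ← hab, max_self, dist_comm mm x, hxm] at hlt
    linarith

/-- The Wasserstein distance to a Dirac measure. -/
lemma wp_dirac (μ : Measure X) [IsProbabilityMeasure μ] (r : ℝ) (z : X) :
    Wp r μ (Measure.dirac z) = gd μ r z := by
  have key : ∀ π ∈ Couplings μ (Measure.dirac z),
      ∫⁻ w : X × X, edist w.1 w.2 ^ r ∂π = ∫⁻ x, edist x z ^ r ∂μ := by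
    rintro π ⟨h1, h2⟩
    have hmeasc : MeasurableSet ({z}ᶜ : Set X) := (measurableSet_singleton z).compl
    have hz : ∀ᵐ w : X × X ∂π, w.2 = z := by
      rw [ae_iff]
      have hset : {w : X × X | ¬ w.2 = z} = Prod.snd ⁻¹' ({z}ᶜ : Set X) := rfl
      rw [hset, ← Measure.map_apply measurable_snd hmeasc, h2,
        Measure.dirac_apply' z hmeasc]
      simp
    calc ∫⁻ w : X × X, edist w.1 w.2 ^ r ∂π
        = ∫⁻ w : X × X, edist w.1 z ^ r ∂π :=
          lintegral_congr_ae (hz.mono fun w hw => by simp only [hw])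
      _ = ∫⁻ x, edist x z ^ r ∂(π.map Prod.fst) :=
          (lintegral_map (meas_edist_rpow z r) measurable_fst).symm
      _ = ∫⁻ x, edist x z ^ r ∂μ := by rw [h1]
  have hmem : μ.prod (Measure.dirac z) ∈ Couplings μ (Measure.dirac z) := by
    constructor
    · rw [Measure.map_fst_prod]; simp
    · rw [Measure.map_snd_prod]; simp
  have hval : ⨅ π ∈ Couplings μ (Measure.dirac z),
      ∫⁻ w : X × X, edist w.1 w.2 ^ r ∂π = ∫⁻ x, edist x z ^ r ∂μ := by
    apply le_antisymm
    · exact iInf₂_le_of_le _ hmem (le_of_eq (key _ hmem))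
    · exact le_iInf₂ fun π hπ => le_of_eq (key π hπ).symm
  unfold Wp gd
  rw [hval]

end ReachAux

/-- If `X` is a reflexive metric space admitting midpoints which is Busemann,
strictly `p`-convex for some `p ∈ [1,∞]`, and uniformly `q`-convex for some `q ∈ [1,∞]`, then
for every `r > 1` each measure in `W_r(X)` has a unique nearest Dirac measure; i.e. the reach
of the Dirac embedding `X ↪ W_r(X)` is infinite. -/
theorem reach_infinite_of_busemann {X : Type*} [MetricSpace X] [MeasurableSpace X]
    [BorelSpace X] (hmid : MidpointSpace X) (hrefl : ReflexiveSpace X)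
    (hbus : Busemann X)
    (hstrict : (∃ p : ℝ, 1 ≤ p ∧ StrictlyPConvex X p) ∨ StrictlyInftyConvex X)
    (hunif : (∃ q : ℝ, 1 ≤ q ∧ UniformlyPConvex X q) ∨ UniformlyInftyConvex X) :
    ∀ r : ℝ, 1 < r →
      (∀ μ ∈ WSpace X r, HasUniqueProj (Wp r) (Diracs X) μ) ∧
      globalReach (Wp r) (WSpace X r) (Diracs X) = ⊤ := by
  intro r hr
  have hpart1 : ∀ μ ∈ WSpace X r, HasUniqueProj (Wp r) (Diracs X) μ := by
    rintro μ ⟨hprob, x₀, hfin⟩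
    haveI := hprob
    obtain ⟨zs, hzs⟩ := ReachAux.exists_min μ hr.le hrefl hbus hfin
    have hWd : ∀ z : X, Wp r μ (Measure.dirac z) = ReachAux.gd μ r z := fun z =>
      ReachAux.wp_dirac μ r z
    have hdist : distToSet (Wp r) μ (Diracs X) = ⨅ w, ReachAux.gd μ r w := by
      rw [distToSet, Diracs, iInf_range]
      exact iInf_congr hWd
    refine ⟨Measure.dirac zs, ⟨⟨zs, rfl⟩, by rw [hWd, hdist, hzs]⟩, ?_⟩
    rintro a ⟨⟨z', rfl⟩, ha⟩
    rw [hWd, hdist] at ha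
    rw [ReachAux.unique_min μ hr hmid hbus hstrict hfin ha hzs]
  refine ⟨hpart1, ?_⟩
  refine eq_top_iff.2 ?_
  rw [globalReach]
  refine le_iInf₂ fun a ha => ?_
  rw [reachAt]
  exact le_sSup fun y hy _ => hpart1 y hy
end
end

section
/- Let (X,d) be a reflexive CAT(0) space. Then for every p > 1, every measure μ ∈ W_p(X) has a unique nearest Dirac measure; that is, reach({δ_z : z ∈ X} ⊆ W_p(X)) = ∞. -/
open MeasureTheory ENNReal Set

noncomputable section

/-- A complete metric space is CAT(0) if for all `z, y` there is `m` such that for all `x`,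
`d(x,m)² ≤ (d(x,y)² + d(x,z)²)/2 − d(y,z)²/4`. -/
def IsCAT0 (X : Type*) [MetricSpace X] : Prop :=
  ∀ z y : X, ∃ m : X, ∀ x : X,
    dist x m ^ 2 ≤ (dist x y ^ 2 + dist x z ^ 2) / 2 - dist y z ^ 2 / 4

section AuxCAT0

variable {X : Type*} [MetricSpace X]

/-- Any midpoint in a CAT(0) space satisfies the comparison inequality. -/
lemma IsCAT0.midpoint_ineq (hcat : IsCAT0 X) {z₁ z₂ m : X} (hm : IsMidpoint z₁ z₂ m) (x : X) :
    dist x m ^ 2 ≤ (dist x z₁ ^ 2 + dist x z₂ ^ 2) / 2 - dist z₁ z₂ ^ 2 / 4 := by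
  obtain ⟨m₀, hm₀⟩ := hcat z₂ z₁
  have h1 : dist z₁ m = dist z₁ z₂ / 2 := hm.1
  have h2 : dist z₂ m = dist z₁ z₂ / 2 := hm.2
  have hmm := hm₀ m
  rw [dist_comm m z₁, dist_comm m z₂, h1, h2] at hmm
  have hz : dist m m₀ ≤ 0 := by nlinarith [dist_nonneg (x := m) (y := m₀)]
  have hmeq : m = m₀ := dist_eq_zero.mp (le_antisymm hz dist_nonneg)
  rw [hmeq]; exact hm₀ x

/-- CAT(0) spaces have midpoints. -/
lemma IsCAT0.exists_midpoint (hcat : IsCAT0 X) (z₁ z₂ : X) : ∃ m, IsMidpoint z₁ z₂ m := by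
  obtain ⟨m₀, hm₀⟩ := hcat z₂ z₁
  have h1 := hm₀ z₁
  have h2 := hm₀ z₂
  have ht := dist_triangle z₁ m₀ z₂
  rw [dist_self z₁] at h1
  rw [dist_self z₂, dist_comm z₂ z₁] at h2
  rw [dist_comm m₀ z₂] at ht
  have ha : dist z₁ m₀ ≤ dist z₁ z₂ / 2 := by
    have hsq : dist z₁ m₀ ^ 2 ≤ (dist z₁ z₂ / 2) ^ 2 := by nlinarith
    have := Real.sqrt_le_sqrt hsq
    rwa [Real.sqrt_sq dist_nonneg, Real.sqrt_sq (by positivity)] at this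
  have hb : dist z₂ m₀ ≤ dist z₁ z₂ / 2 := by
    have hsq : dist z₂ m₀ ^ 2 ≤ (dist z₁ z₂ / 2) ^ 2 := by nlinarith
    have := Real.sqrt_le_sqrt hsq
    rwa [Real.sqrt_sq dist_nonneg, Real.sqrt_sq (by positivity)] at this
  exact ⟨m₀, by constructor <;> linarith⟩

/-- Pointwise strict `p`-convexity of distance-to-a-point functions in CAT(0) spaces. -/
lemma cat0_strict_key {p : ℝ} (hp : 1 < p) {z₁ z₂ m : X} (hne : z₁ ≠ z₂)
    (hineq : ∀ x, dist x m ^ 2 ≤ (dist x z₁ ^ 2 + dist x z₂ ^ 2) / 2 - dist z₁ z₂ ^ 2 / 4)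
    (x : X) :
    dist x m ^ p < (dist x z₁ ^ p + dist x z₂ ^ p) / 2 := by
  have hp0 : (0:ℝ) < p := by linarith
  set a := dist x z₁ with hadef
  set b := dist x z₂ with hbdef
  set c := dist x m with hcdef
  set D := dist z₁ z₂ with hDdef
  have hD0 : 0 < D := dist_pos.mpr hne
  have h2 := hineq x
  have habs : |a - b| ≤ D := by
    have h := abs_dist_sub_le z₁ z₂ x
    rwa [dist_comm z₁ x, dist_comm z₂ x] at h
  have hsq : (a - b) ^ 2 ≤ D ^ 2 := by
    have h1 := abs_nonneg (a - b)
    nlinarith [sq_abs (a - b)]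
  have ha0 : 0 ≤ a := dist_nonneg
  have hb0 : 0 ≤ b := dist_nonneg
  have hc0 : 0 ≤ c := dist_nonneg
  by_cases hab : a = b
  · have hlt : c < a := by
      have hsq2 : c ^ 2 < a ^ 2 := by nlinarith
      have := Real.sqrt_lt_sqrt (sq_nonneg c) hsq2
      rwa [Real.sqrt_sq hc0, Real.sqrt_sq ha0] at this
    have := Real.rpow_lt_rpow hc0 hlt hp0
    have hbe : b ^ p = a ^ p := by rw [hab]
    calc c ^ p < a ^ p := this
      _ = (a ^ p + b ^ p) / 2 := by rw [hbe]; ring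
  · have hc2 : c ≤ (a + b) / 2 := by
      have hsq2 : c ^ 2 ≤ ((a + b) / 2) ^ 2 := by nlinarith
      have := Real.sqrt_le_sqrt hsq2
      rwa [Real.sqrt_sq hc0, Real.sqrt_sq (by positivity)] at this
    have hmono := Real.rpow_le_rpow hc0 hc2 hp0.le
    have hconv := (strictConvexOn_rpow hp).2 (Set.mem_Ici.mpr ha0) (Set.mem_Ici.mpr hb0) hab
      (by norm_num : (0:ℝ) < 1/2) (by norm_num : (0:ℝ) < 1/2) (by norm_num)
    simp only [smul_eq_mul] at hconv
    have he : (1/2 : ℝ) * a + (1/2) * b = (a + b) / 2 := by ring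
    rw [he] at hconv
    calc c ^ p ≤ ((a + b) / 2) ^ p := hmono
      _ < 1/2 * a ^ p + 1/2 * b ^ p := hconv
      _ = (a ^ p + b ^ p) / 2 := by ring

end AuxCAT0

/-- If `X` is a reflexive CAT(0) space, then for every `p > 1` each measure
in `W_p(X)` has a unique nearest Dirac measure; i.e. the reach of the Dirac embedding
`X ↪ W_p(X)` is infinite. -/
theorem reach_infinite_of_CAT0 {X : Type*} [MetricSpace X] [CompleteSpace X]
    [MeasurableSpace X] [BorelSpace X] (hcat : IsCAT0 X) (hrefl : ReflexiveSpace X) :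
    ∀ p : ℝ, 1 < p →
      (∀ μ ∈ WSpace X p, HasUniqueProj (Wp p) (Diracs X) μ) ∧
      globalReach (Wp p) (WSpace X p) (Diracs X) = ⊤ := by
  intro p hp
  have hp0 : (0:ℝ) < p := by linarith
  have hip : (0:ℝ) < 1/p := by positivity
  have pinv : ∀ c : ℝ≥0∞, (c ^ p) ^ (1/p) = c := by
    intro c
    rw [← ENNReal.rpow_mul, mul_one_div, div_self hp0.ne', ENNReal.rpow_one]
  have pinv' : ∀ c : ℝ≥0∞, (c ^ (1/p)) ^ p = c := by
    intro c
    rw [← ENNReal.rpow_mul, one_div_mul_cancel hp0.ne', ENNReal.rpow_one]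
  have meas : ∀ z : X, Measurable fun x : X => edist x z ^ p := fun z =>
    (ENNReal.continuous_rpow_const.comp (continuous_id.edist continuous_const)).measurable
  have main : ∀ μ ∈ WSpace X p, HasUniqueProj (Wp p) (Diracs X) μ := by
    intro μ hμ
    obtain ⟨hprob, x₀, hx₀⟩ := hμ
    haveI := hprob
    set G : X → ℝ≥0∞ := fun z => ∫⁻ x, edist x z ^ p ∂μ with hGdef
    set φ : X → ℝ≥0∞ := fun z => (G z) ^ (1/p) with hφdef
    -- every coupling with a Dirac measure has the same cost
    have int_coup : ∀ z : X, ∀ π ∈ Couplings μ (Measure.dirac z),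
        ∫⁻ ω : X × X, edist ω.1 ω.2 ^ p ∂π = G z := by
      intro z π hπ
      obtain ⟨h1, h2⟩ := hπ
      have hz0 : π (Prod.snd ⁻¹' ({z}ᶜ)) = 0 := by
        rw [← Measure.map_apply measurable_snd (measurableSet_singleton z).compl, h2]
        simp
      have hae : ∀ᵐ ω : X × X ∂π, ω.2 = z := by
        rw [ae_iff]
        have hset : {ω : X × X | ¬ ω.2 = z} = Prod.snd ⁻¹' ({z}ᶜ) := by
          ext ω; simp
        rw [hset]; exact hz0
      calc ∫⁻ ω : X × X, edist ω.1 ω.2 ^ p ∂π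
          = ∫⁻ ω : X × X, edist ω.1 z ^ p ∂π :=
            lintegral_congr_ae (hae.mono fun ω h => by show edist ω.1 ω.2 ^ p = edist ω.1 z ^ p; rw [h])
        _ = ∫⁻ x, edist x z ^ p ∂(π.map Prod.fst) :=
            (lintegral_map (meas z) measurable_fst).symm
        _ = G z := by rw [h1]
    have mem_coup : ∀ z : X, μ.prod (Measure.dirac z) ∈ Couplings μ (Measure.dirac z) := by
      intro z
      refine ⟨?_, ?_⟩
      · rw [Measure.map_fst_prod]; simp
      · rw [Measure.map_snd_prod]; simp
    have Wp_eq : ∀ z : X, Wp p μ (Measure.dirac z) = φ z := by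
      intro z
      have hinf : (⨅ π ∈ Couplings μ (Measure.dirac z),
          ∫⁻ ω : X × X, edist ω.1 ω.2 ^ p ∂π) = G z := by
        apply le_antisymm
        · exact le_of_le_of_eq (iInf₂_le _ (mem_coup z)) (int_coup z _ (mem_coup z))
        · exact le_iInf₂ fun π hπ => (int_coup z π hπ).ge
      show (⨅ π ∈ Couplings μ (Measure.dirac z),
          ∫⁻ ω : X × X, edist ω.1 ω.2 ^ p ∂π) ^ (1/p) = φ z
      rw [hinf]
    have dist_eq : distToSet (Wp p) μ (Diracs X) = ⨅ z : X, φ z := by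
      show (⨅ a ∈ Set.range (Measure.dirac : X → Measure X), Wp p μ a) = ⨅ z : X, φ z
      rw [iInf_range]
      exact iInf_congr Wp_eq
    -- Minkowski-type inequalities
    have hMink : ∀ z w : X, φ z ≤ φ w + edist w z := by
      intro z w
      have h1 : G z ≤ ∫⁻ x, ((fun x : X => edist x w) + fun _ : X => edist w z) x ^ p ∂μ := by
        apply lintegral_mono
        intro x
        exact ENNReal.rpow_le_rpow (edist_triangle x w z) hp0.le
      have h2 := ENNReal.lintegral_Lp_add_le (μ := μ) (f := fun x : X => edist x w)
        (g := fun _ : X => edist w z) (Continuous.measurable (by continuity)).aemeasurable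
        aemeasurable_const hp.le
      have h3 : (∫⁻ _ : X, edist w z ^ p ∂μ) ^ (1/p) = edist w z := by
        rw [lintegral_const, measure_univ, mul_one, pinv]
      calc φ z ≤ (∫⁻ x, ((fun x : X => edist x w) + fun _ : X => edist w z) x ^ p ∂μ) ^ (1/p) :=
            ENNReal.rpow_le_rpow h1 hip.le
        _ ≤ (∫⁻ x, edist x w ^ p ∂μ) ^ (1/p) + (∫⁻ _ : X, edist w z ^ p ∂μ) ^ (1/p) := h2
        _ = φ w + edist w z := by rw [h3]
    have hrev : ∀ z : X, edist z x₀ ≤ φ z + φ x₀ := by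
      intro z
      have h0 : edist z x₀ = (∫⁻ _ : X, edist z x₀ ^ p ∂μ) ^ (1/p) := by
        rw [lintegral_const, measure_univ, mul_one, pinv]
      have h1 : (∫⁻ _ : X, edist z x₀ ^ p ∂μ)
          ≤ ∫⁻ x, ((fun x : X => edist x z) + fun x : X => edist x x₀) x ^ p ∂μ := by
        apply lintegral_mono
        intro x
        apply ENNReal.rpow_le_rpow _ hp0.le
        calc edist z x₀ ≤ edist z x + edist x x₀ := edist_triangle _ _ _
          _ = edist x z + edist x x₀ := by rw [edist_comm z x]
      have h2 := ENNReal.lintegral_Lp_add_le (μ := μ) (f := fun x : X => edist x z)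
        (g := fun x : X => edist x x₀) (Continuous.measurable (continuous_id.edist continuous_const)).aemeasurable
        (Continuous.measurable (continuous_id.edist continuous_const)).aemeasurable hp.le
      rw [h0]
      exact le_trans (ENNReal.rpow_le_rpow h1 hip.le) h2
    have hφx₀ : φ x₀ ≠ ⊤ := ENNReal.rpow_ne_top_of_nonneg hip.le hx₀
    have hφ_ne_top : ∀ z : X, φ z ≠ ⊤ := by
      intro z
      exact ne_top_of_le_ne_top
        (ENNReal.add_ne_top.mpr ⟨hφx₀, edist_ne_top x₀ z⟩) (hMink z x₀)
    have hG_ne_top : ∀ z : X, G z ≠ ⊤ := by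
      intro z
      have hGe : G z = (φ z) ^ p := (pinv' (G z)).symm
      rw [hGe]
      exact ENNReal.rpow_ne_top_of_nonneg hp0.le (hφ_ne_top z)
    -- strict midpoint inequality for G
    have hGmid : ∀ z₁ z₂ m : X, IsMidpoint z₁ z₂ m → z₁ ≠ z₂ →
        G m < (G z₁ + G z₂) / 2 := by
      intro z₁ z₂ m hm hne
      have hptwise : ∀ x : X, edist x m ^ p < (edist x z₁ ^ p + edist x z₂ ^ p) / 2 := by
        intro x
        have h := cat0_strict_key hp hne (hcat.midpoint_ineq hm) x
        rw [edist_dist, edist_dist, edist_dist,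
          ENNReal.ofReal_rpow_of_nonneg dist_nonneg hp0.le,
          ENNReal.ofReal_rpow_of_nonneg dist_nonneg hp0.le,
          ENNReal.ofReal_rpow_of_nonneg dist_nonneg hp0.le]
        have hrw : (ENNReal.ofReal (dist x z₁ ^ p) + ENNReal.ofReal (dist x z₂ ^ p)) / 2
            = ENNReal.ofReal ((dist x z₁ ^ p + dist x z₂ ^ p) / 2) := by
          rw [ENNReal.ofReal_div_of_pos (by norm_num),
            ENNReal.ofReal_add (Real.rpow_nonneg dist_nonneg p)
              (Real.rpow_nonneg dist_nonneg p)]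
          norm_num
        rw [hrw]
        exact (ENNReal.ofReal_lt_ofReal_iff
          (lt_of_le_of_lt (Real.rpow_nonneg dist_nonneg p) h)).mpr h
      have hgmeas : Measurable fun x : X => (edist x z₁ ^ p + edist x z₂ ^ p) / 2 := by
        simp only [div_eq_mul_inv]
        exact ((meas z₁).add (meas z₂)).mul_const _
      have hstrict := lintegral_strict_mono (μ := μ) (IsProbabilityMeasure.ne_zero μ)
        hgmeas.aemeasurable (hG_ne_top m) (ae_of_all μ hptwise)
      have hcomp : ∫⁻ x, (edist x z₁ ^ p + edist x z₂ ^ p) / 2 ∂μ = (G z₁ + G z₂) / 2 := by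
        simp only [div_eq_mul_inv]
        rw [lintegral_mul_const' 2⁻¹ _ (by simp), lintegral_add_left (meas z₁)]
      rw [hcomp] at hstrict
      exact hstrict
    -- existence of the minimizer via reflexivity
    obtain ⟨zmin, hzmin⟩ : ∃ z : X, φ z = ⨅ w : X, φ w := by
      have hd_top : (⨅ w : X, φ w) < ⊤ := lt_of_le_of_lt (iInf_le _ x₀) hφx₀.lt_top
      set I := (↥(Set.Ioo (⨅ w : X, φ w) (⊤ : ℝ≥0∞)))ᵒᵈ with hI
      haveI : Nonempty I := by
        obtain ⟨r, hr⟩ := exists_between hd_top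
        exact ⟨OrderDual.toDual ⟨r, hr⟩⟩
      have hdir : IsDirected I (· ≤ ·) := by
        constructor
        intro i j
        refine ⟨OrderDual.toDual ⟨min (OrderDual.ofDual i).1 (OrderDual.ofDual j).1,
          lt_min (OrderDual.ofDual i).2.1 (OrderDual.ofDual j).2.1,
          lt_of_le_of_lt (min_le_left _ _) (OrderDual.ofDual i).2.2⟩, ?_, ?_⟩
        · show min (OrderDual.ofDual i).1 (OrderDual.ofDual j).1 ≤ (OrderDual.ofDual i).1
          exact min_le_left _ _
        · show min (OrderDual.ofDual i).1 (OrderDual.ofDual j).1 ≤ (OrderDual.ofDual j).1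
          exact min_le_right _ _
      set C : I → Set X := fun i => {z : X | φ z ≤ (OrderDual.ofDual i).1} with hC
      have hprops : ∀ i : I, (C i).Nonempty ∧ Bornology.IsBounded (C i) ∧ IsClosed (C i) ∧
          MConvexSet (C i) := by
        intro i
        obtain ⟨hr1, hr2⟩ := (OrderDual.ofDual i).2
        refine ⟨?_, ?_, ?_, ?_⟩
        · obtain ⟨z, hz⟩ := iInf_lt_iff.mp hr1
          exact ⟨z, hz.le⟩
        · apply (Metric.isBounded_closedBall
            (x := x₀) (r := (((OrderDual.ofDual i).1 + φ x₀)).toReal)).subset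
          intro z hz
          have h1 : edist z x₀ ≤ (OrderDual.ofDual i).1 + φ x₀ :=
            le_trans (hrev z) (add_le_add_left hz _)
          have h2 : dist z x₀ ≤ ((OrderDual.ofDual i).1 + φ x₀).toReal := by
            rw [dist_edist]
            exact ENNReal.toReal_mono (ENNReal.add_ne_top.mpr ⟨hr2.ne, hφx₀⟩) h1
          exact Metric.mem_closedBall.mpr h2
        · apply isClosed_of_closure_subset
          intro z hz
          rw [EMetric.mem_closure_iff] at hz
          show φ z ≤ (OrderDual.ofDual i).1
          apply ENNReal.le_of_forall_pos_le_add
          intro ε hε _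
          obtain ⟨w, hw, hlt⟩ := hz ε (by exact_mod_cast hε)
          calc φ z ≤ φ w + edist w z := hMink z w
            _ ≤ (OrderDual.ofDual i).1 + ε :=
              add_le_add hw (by rw [edist_comm]; exact hlt.le)
        · intro z₁ h₁ z₂ h₂ m hm
          by_cases hne : z₁ = z₂
          · subst hne
            have hd0 : dist z₁ m = 0 := by
              have := hm.1; rw [dist_self] at this; linarith
            have hmz : m = z₁ := by rw [← dist_eq_zero, dist_comm]; exact hd0
            rwa [hmz]
          · show φ m ≤ (OrderDual.ofDual i).1
            have hG : G m ≤ (G z₁ + G z₂) / 2 := (hGmid z₁ z₂ m hm hne).le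
            have hz₁ : G z₁ ≤ (OrderDual.ofDual i).1 ^ p := by
              calc G z₁ = (φ z₁) ^ p := (pinv' (G z₁)).symm
                _ ≤ (OrderDual.ofDual i).1 ^ p := ENNReal.rpow_le_rpow h₁ hp0.le
            have hz₂ : G z₂ ≤ (OrderDual.ofDual i).1 ^ p := by
              calc G z₂ = (φ z₂) ^ p := (pinv' (G z₂)).symm
                _ ≤ (OrderDual.ofDual i).1 ^ p := ENNReal.rpow_le_rpow h₂ hp0.le
            have hGm : G m ≤ (OrderDual.ofDual i).1 ^ p := by
              calc G m ≤ (G z₁ + G z₂) / 2 := hG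
                _ ≤ ((OrderDual.ofDual i).1 ^ p + (OrderDual.ofDual i).1 ^ p) / 2 := by
                    gcongr
                _ = (OrderDual.ofDual i).1 ^ p := by
                    rw [← two_mul, mul_div_assoc]
                    exact ENNReal.mul_div_cancel two_ne_zero (by norm_num)
            calc φ m = (G m) ^ (1/p) := rfl
              _ ≤ ((OrderDual.ofDual i).1 ^ p) ^ (1/p) := ENNReal.rpow_le_rpow hGm hip.le
              _ = (OrderDual.ofDual i).1 := pinv _
      have hmono : ∀ i j : I, i ≤ j → C j ⊆ C i := by
        intro i j hij z hz
        show φ z ≤ (OrderDual.ofDual i).1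
        have h' : OrderDual.ofDual j ≤ OrderDual.ofDual i := hij
        exact le_trans hz h'
      obtain ⟨zmin, hzmin⟩ := hrefl I hdir C hprops hmono
      refine ⟨zmin, le_antisymm ?_ (iInf_le _ zmin)⟩
      by_contra hlt
      push_neg at hlt
      obtain ⟨r, hr1, hr2⟩ := exists_between hlt
      have hr_top : r < ⊤ := lt_of_lt_of_le hr2 le_top
      have hzr : φ zmin ≤ r :=
        Set.mem_iInter.mp hzmin (OrderDual.toDual ⟨r, hr1, hr_top⟩)
      exact absurd hzr (not_le.mpr hr2)
    -- assemble the unique projection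
    refine ⟨Measure.dirac zmin, ⟨⟨zmin, rfl⟩, ?_⟩, ?_⟩
    · rw [Wp_eq, dist_eq]; exact hzmin
    · rintro ν ⟨⟨z', rfl⟩, hν⟩
      rw [Wp_eq, dist_eq] at hν
      by_cases hne : z' = zmin
      · rw [hne]
      · exfalso
        obtain ⟨m, hm⟩ := hcat.exists_midpoint z' zmin
        have h1 : G z' = (⨅ w : X, φ w) ^ p := by
          rw [← hν]; exact (pinv' (G z')).symm
        have h2 : G zmin = (⨅ w : X, φ w) ^ p := by
          rw [← hzmin]; exact (pinv' (G zmin)).symm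
        have h3 : G m < (⨅ w : X, φ w) ^ p := by
          have hs := hGmid z' zmin m hm hne
          rw [h1, h2, ← two_mul, mul_div_assoc] at hs
          rwa [ENNReal.mul_div_cancel two_ne_zero (by norm_num)] at hs
        have h4 : φ m < ⨅ w : X, φ w := by
          have := ENNReal.rpow_lt_rpow h3 hip
          rwa [pinv] at this
        exact absurd (iInf_le φ m) (not_le.mpr h4)
  refine ⟨main, ?_⟩
  have hreach : ∀ a, reachAt (Wp p) (WSpace X p) (Diracs X) a = ⊤ := by
    intro a
    apply top_unique
    apply le_sSup
    intro y hy _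
    exact main y hy
  simp only [globalReach, hreach]
  simp
end
end

section
/- Let (X,d) be a geodesic metric space, θ = φ (i.e. ψ ≡ Id) with φ : ℝ⁺ → ℝ⁺ convex, strictly increasing, continuous, φ(1) = 1, so that x ↦ δ_x isometrically embeds X into the Orlicz–Wasserstein space W_θ(X). Let x ≠ y in X, 0 < λ < 1, and μ = λδ_x + (1−λ)δ_y. Then any point a ∈ X minimizing z ↦ W_θ(δ_z, μ) lies on a minimizing geodesic from x to y: for every a not on any minimizing geodesic from x to y there exists a' on a minimizing geodesic from x to y with W_θ(δ_{a'}, μ) < W_θ(δ_a, μ). -/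
open MeasureTheory ENNReal Set

noncomputable section

/-- The standing assumptions on the cost function `φ` in the Orlicz–Wasserstein construction
(with `ψ ≡ Id`): `φ : ℝ⁺ → ℝ⁺` is convex, strictly increasing, continuous and `φ(1) = 1`
(so that `x ↦ δ_x` is an isometric embedding of `X` into `W_φ(X)`). -/
structure IsOrliczCost (φ : ℝ → ℝ) : Prop where
  convexOn : ConvexOn ℝ (Set.Ici 0) φ
  strictMonoOn : StrictMonoOn φ (Set.Ici 0)
  continuousOn : ContinuousOn φ (Set.Ici 0)
  nonneg : ∀ t ∈ Set.Ici (0:ℝ), 0 ≤ φ t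
  map_one : φ 1 = 1

/-- The Orlicz–Wasserstein distance associated to `φ` (with `ψ ≡ Id`):
`W_φ(μ,ν) = inf { t > 0 : inf_π ∫ φ(d(x,y)/t) dπ ≤ 1 }`. -/
def WOrlicz {X : Type*} [MetricSpace X] [MeasurableSpace X] (φ : ℝ → ℝ)
    (μ ν : Measure X) : ℝ :=
  sInf {t : ℝ | 0 < t ∧
    sInf ((fun π : Measure (X × X) => ∫ z, φ (dist z.1 z.2 / t) ∂π) '' Couplings μ ν) ≤ 1}

/-- The Orlicz–Wasserstein space: probability measures `μ` with
`∫ φ(d(x,x₀)/t) dμ < ∞` for some `t > 0`. -/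
def OrliczSpace (X : Type*) [MetricSpace X] [MeasurableSpace X] (φ : ℝ → ℝ) :
    Set (Measure X) :=
  {μ | IsProbabilityMeasure μ ∧ ∃ x₀ : X, ∃ t : ℝ, 0 < t ∧
    ∫⁻ x, ENNReal.ofReal (φ (dist x x₀ / t)) ∂μ ≠ ⊤}

set_option maxHeartbeats 1000000
set_option linter.unusedSectionVars false

section AuxReal
variable {φ : ℝ → ℝ}

lemma phi_unbounded (hφ : IsOrliczCost φ) (M : ℝ) : ∃ s : ℝ, 2 ≤ s ∧ M < φ s := by
  have hk : 0 < φ 2 - φ 1 := by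
    have := hφ.strictMonoOn (by norm_num : (1:ℝ) ∈ Ici 0) (by norm_num : (2:ℝ) ∈ Ici 0) (by norm_num)
    linarith
  set k := φ 2 - φ 1 with hkdef
  refine ⟨max 3 (3 + (M - φ 2)/k), le_trans (by norm_num) (le_max_left _ _), ?_⟩
  set s := max 3 (3 + (M - φ 2)/k) with hs
  have h3 : (3:ℝ) ≤ s := le_max_left _ _
  have h2 : (2:ℝ) < s := by linarith
  have hslope := hφ.convexOn.slope_mono_adjacent (by norm_num : (1:ℝ) ∈ Ici 0)
    (le_of_lt (lt_trans (by norm_num) h2) : (0:ℝ) ≤ s) (by norm_num) h2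
  have hineq : φ 2 + k * (s - 2) ≤ φ s := by
    have hs2 : (0:ℝ) < s - 2 := by linarith
    rw [div_le_div_iff₀ (by norm_num) hs2] at hslope
    nlinarith
  have hge : (M - φ 2)/k ≤ s - 3 := by linarith [le_max_right 3 (3 + (M - φ 2)/k)]
  rw [div_le_iff₀ hk] at hge
  nlinarith

lemma cont_aux (hφ : IsOrliczCost φ) {d : ℝ} (hd : 0 ≤ d) :
    ContinuousOn (fun t : ℝ => φ (d / t)) (Ioi 0) := by
  apply hφ.continuousOn.comp
  · exact continuousOn_const.div continuousOn_id (fun t ht => ne_of_gt ht)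
  · intro t ht
    exact div_nonneg hd (le_of_lt ht)

lemma key_sInf_lt (hφ : IsOrliczCost φ) {l : ℝ} (hl0 : 0 < l) (hl1 : l < 1)
    {d1 d2 d1' d2' : ℝ} (h1' : 0 ≤ d1') (h2' : 0 ≤ d2') (h1 : d1' ≤ d1) (h2 : d2' ≤ d2)
    (hst : d1' < d1 ∨ d2' < d2) (hpos : 0 < d1 ∨ 0 < d2) :
    sInf {t : ℝ | 0 < t ∧ l * φ (d1'/t) + (1-l) * φ (d2'/t) ≤ 1} <
    sInf {t : ℝ | 0 < t ∧ l * φ (d1/t) + (1-l) * φ (d2/t) ≤ 1} := by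
  have hd1 : 0 ≤ d1 := le_trans h1' h1
  have hd2 : 0 ≤ d2 := le_trans h2' h2
  set F : ℝ → ℝ := fun t => l * φ (d1/t) + (1-l) * φ (d2/t) with hF
  set F' : ℝ → ℝ := fun t => l * φ (d1'/t) + (1-l) * φ (d2'/t) with hF'
  set S : Set ℝ := {t : ℝ | 0 < t ∧ F t ≤ 1} with hS
  set S' : Set ℝ := {t : ℝ | 0 < t ∧ F' t ≤ 1} with hS'
  have hmono := hφ.strictMonoOn.monotoneOn
  have hmem : ∀ d t : ℝ, 0 ≤ d → 0 < t → d ≤ t → φ (d / t) ≤ 1 := by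
    intro d t hd ht hdt
    rw [← hφ.map_one]
    exact hmono (mem_Ici.2 (div_nonneg hd ht.le)) (by norm_num) ((div_le_one ht).2 hdt)
  have hSne : S.Nonempty := by
    refine ⟨max (max d1 d2) 1, lt_of_lt_of_le one_pos (le_max_right _ _), ?_⟩
    have ht : (0:ℝ) < max (max d1 d2) 1 := lt_of_lt_of_le one_pos (le_max_right _ _)
    have e1 := hmem d1 _ hd1 ht (le_trans (le_max_left _ _) (le_max_left _ _))
    have e2 := hmem d2 _ hd2 ht (le_trans (le_max_right _ _) (le_max_left _ _))
    simp only [hF]; nlinarith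
  have hSbdd : BddBelow S := ⟨0, fun t ht => le_of_lt ht.1⟩
  set w := sInf S with hw
  -- positivity of w
  obtain ⟨s0, hs02, hs0⟩ := phi_unbounded hφ (1 / min l (1-l))
  have hm : 0 < min l (1-l) := lt_min hl0 (by linarith)
  have hs0pos : (0:ℝ) < s0 := by linarith
  have hbig : ∀ d t : ℝ, 0 ≤ d → 0 < t → t * s0 < d → 1 / min l (1-l) < φ (d / t) := by
    intro d t hd ht h
    have hlt : s0 < d / t := by rw [lt_div_iff₀ ht]; linarith [mul_comm t s0]
    exact lt_trans hs0 (hφ.strictMonoOn (mem_Ici.2 hs0pos.le)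
      (mem_Ici.2 (div_nonneg hd ht.le)) hlt)
  have hlb : ∀ t ∈ S, max d1 d2 / s0 ≤ t := by
    rintro t ⟨htpos, htF⟩
    by_contra hc
    push_neg at hc
    rw [lt_div_iff₀ hs0pos] at hc
    have hn1 : 0 ≤ φ (d1 / t) := hφ.nonneg _ (mem_Ici.2 (div_nonneg hd1 htpos.le))
    have hn2 : 0 ≤ φ (d2 / t) := hφ.nonneg _ (mem_Ici.2 (div_nonneg hd2 htpos.le))
    rcases lt_max_iff.mp hc with h | h
    · have hp := hbig d1 t hd1 htpos h
      rw [div_lt_iff₀ hm] at hp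
      have : l * φ (d1/t) + (1-l) * φ (d2/t) ≤ 1 := htF
      nlinarith [min_le_left l (1-l)]
    · have hp := hbig d2 t hd2 htpos h
      rw [div_lt_iff₀ hm] at hp
      have : l * φ (d1/t) + (1-l) * φ (d2/t) ≤ 1 := htF
      nlinarith [min_le_right l (1-l)]
  have hwpos : 0 < w := by
    have hDpos : 0 < max d1 d2 := lt_max_iff.mpr hpos
    exact lt_of_lt_of_le (div_pos hDpos hs0pos) (le_csInf hSne hlb)
  -- F w ≤ 1
  have hFc : ContinuousOn F (Ioi 0) :=
    (continuousOn_const.mul (cont_aux hφ hd1)).add (continuousOn_const.mul (cont_aux hφ hd2))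
  have hFw : F w ≤ 1 := by
    by_contra hc
    push_neg at hc
    have hFca : ContinuousAt F w := hFc.continuousAt (Ioi_mem_nhds hwpos)
    have hev : F ⁻¹' Ioi 1 ∈ nhds w := hFca (Ioi_mem_nhds hc)
    obtain ⟨ε, hε, hball⟩ := Metric.mem_nhds_iff.mp hev
    obtain ⟨t, htS, htlt⟩ := Real.lt_sInf_add_pos hSne hε
    have hge : w ≤ t := csInf_le hSbdd htS
    have : t ∈ Metric.ball w ε := by
      rw [Metric.mem_ball, Real.dist_eq, abs_of_nonneg (by linarith)]
      linarith
    have := hball this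
    simp only [mem_preimage, mem_Ioi] at this
    exact absurd htS.2 (by linarith)
  -- F' w < 1
  have hle1 : φ (d1'/w) ≤ φ (d1/w) :=
    hmono (mem_Ici.2 (div_nonneg h1' hwpos.le)) (mem_Ici.2 (div_nonneg hd1 hwpos.le))
      (by gcongr)
  have hle2 : φ (d2'/w) ≤ φ (d2/w) :=
    hmono (mem_Ici.2 (div_nonneg h2' hwpos.le)) (mem_Ici.2 (div_nonneg hd2 hwpos.le))
      (by gcongr)
  have hF'w : F' w < 1 := by
    have hstw : F' w < F w := by
      rcases hst with h | h
      · have : φ (d1'/w) < φ (d1/w) :=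
          hφ.strictMonoOn (mem_Ici.2 (div_nonneg h1' hwpos.le))
            (mem_Ici.2 (div_nonneg hd1 hwpos.le)) (by gcongr)
        simp only [hF, hF']; nlinarith
      · have : φ (d2'/w) < φ (d2/w) :=
          hφ.strictMonoOn (mem_Ici.2 (div_nonneg h2' hwpos.le))
            (mem_Ici.2 (div_nonneg hd2 hwpos.le)) (by gcongr)
        simp only [hF, hF']; nlinarith
    linarith
  -- find t' < w in S'
  have hF'c : ContinuousOn F' (Ioi 0) :=
    (continuousOn_const.mul (cont_aux hφ h1')).add (continuousOn_const.mul (cont_aux hφ h2'))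
  have hF'ca : ContinuousAt F' w := hF'c.continuousAt (Ioi_mem_nhds hwpos)
  have hev : F' ⁻¹' Iio 1 ∈ nhds w := hF'ca (Iio_mem_nhds hF'w)
  obtain ⟨ε, hε, hball⟩ := Metric.mem_nhds_iff.mp hev
  set t' := max (w/2) (w - ε/2) with ht'
  have ht'pos : 0 < t' := lt_of_lt_of_le (half_pos hwpos) (le_max_left _ _)
  have ht'lt : t' < w := max_lt (by linarith) (by linarith)
  have ht'ball : t' ∈ Metric.ball w ε := by
    rw [Metric.mem_ball, Real.dist_eq, abs_of_nonpos (by linarith), neg_sub]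
    have : w - ε/2 ≤ t' := le_max_right _ _
    linarith
  have ht'S' : t' ∈ S' := by
    have := hball ht'ball
    simp only [mem_preimage, mem_Iio] at this
    exact ⟨ht'pos, le_of_lt this⟩
  calc sInf S' ≤ t' := csInf_le ⟨0, fun t ht => le_of_lt ht.1⟩ ht'S'
    _ < w := ht'lt

end AuxReal

section AuxGeo
variable {X : Type*} [MetricSpace X]

lemma onMinGeodesic_left (hgeo : IsGeodesicSpace X) (x y : X) : OnMinGeodesic x x y := by
  obtain ⟨γ, hγ⟩ := hgeo x y
  exact ⟨γ, 0, by norm_num, hγ, hγ.1⟩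

lemma onMinGeodesic_right (hgeo : IsGeodesicSpace X) (x y : X) : OnMinGeodesic y x y := by
  obtain ⟨γ, hγ⟩ := hgeo x y
  exact ⟨γ, 1, by norm_num, hγ, hγ.2.1⟩

/-- concatenation: a metrically-between point in a geodesic space lies on a geodesic -/
lemma onMinGeodesic_of_dist_eq (hgeo : IsGeodesicSpace X) {a x y : X}
    (h : dist x a + dist a y = dist x y) : OnMinGeodesic a x y := by
  by_cases hax : a = x
  · subst hax; exact onMinGeodesic_left hgeo a y
  by_cases hay : a = y
  · subst hay; exact onMinGeodesic_right hgeo x a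
  have hd1 : 0 < dist x a := dist_pos.mpr fun h' => hax h'.symm
  have hd2 : 0 < dist a y := dist_pos.mpr hay
  have hdxy : 0 < dist x y := by rw [← h]; linarith
  obtain ⟨γ1, hγ1⟩ := hgeo x a
  obtain ⟨γ2, hγ2⟩ := hgeo a y
  set s : ℝ := dist x a / dist x y with hsdef
  have hs0 : 0 < s := div_pos hd1 hdxy
  have hs1 : s < 1 := (div_lt_one hdxy).2 (by linarith)
  have hd1s : dist x a = s * dist x y := by rw [hsdef, div_mul_cancel₀ _ hdxy.ne']
  have hd2s : dist a y = (1 - s) * dist x y := by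
    have : dist a y = dist x y - dist x a := by linarith
    rw [this, hd1s]; ring
  set γ : ℝ → X := fun t => if t ≤ s then γ1 (t / s) else γ2 ((t - s) / (1 - s)) with hγdef
  -- leg computations
  have leg1 : ∀ u, 0 ≤ u → u ≤ s → γ u = γ1 (u / s) := fun u _ hu => if_pos hu
  have leg2 : ∀ u, s < u → γ u = γ2 ((u - s) / (1 - s)) := fun u hu => if_neg (not_le.2 hu)
  have mem1 : ∀ u, 0 ≤ u → u ≤ s → u / s ∈ Icc (0:ℝ) 1 :=
    fun u h0 h1 => ⟨div_nonneg h0 hs0.le, (div_le_one hs0).2 h1⟩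
  have mem2 : ∀ u, s < u → u ≤ 1 → (u - s) / (1 - s) ∈ Icc (0:ℝ) 1 := fun u h0 h1 =>
    ⟨div_nonneg (by linarith) (by linarith), (div_le_one (by linarith)).2 (by linarith)⟩
  -- cross-leg distance
  have cross : ∀ u v, 0 ≤ u → u ≤ s → s < v → v ≤ 1 →
      dist (γ u) (γ v) = (v - u) * dist x y := by
    intro u v hu0 hus hsv hv1
    set α := u / s with hα
    set β := (v - s) / (1 - s) with hβ
    have hαm := mem1 u hu0 hus
    have hβm := mem2 v hsv hv1
    have hαs : u = α * s := by rw [hα, div_mul_cancel₀ _ hs0.ne']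
    have hβs : v - s = β * (1 - s) := by rw [hβ, div_mul_cancel₀ _ (by linarith : (1:ℝ) - s ≠ 0)]
    rw [leg1 u hu0 hus, leg2 v hsv]
    have e1 : dist (γ1 α) x = (α : ℝ) * dist x a := by
      have h' := hγ1.2.2 α hαm 0 (by norm_num)
      rw [hγ1.1] at h'
      rw [h', sub_zero, abs_of_nonneg hαm.1]
    have e2 : dist (γ1 α) a = (1 - α) * dist x a := by
      have h' := hγ1.2.2 α hαm 1 (by norm_num)
      rw [hγ1.2.1] at h'
      rw [h', abs_of_nonpos (by linarith [hαm.2]), neg_sub]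
    have e3 : dist a (γ2 β) = β * dist a y := by
      have h' := hγ2.2.2 0 (by norm_num) β hβm
      rw [hγ2.1] at h'
      rw [h', zero_sub, abs_neg, abs_of_nonneg hβm.1]
    have e4 : dist (γ2 β) y = (1 - β) * dist a y := by
      have h' := hγ2.2.2 β hβm 1 (by norm_num)
      rw [hγ2.2.1] at h'
      rw [h', abs_of_nonpos (by linarith [hβm.2]), neg_sub]
    have hub : dist (γ1 α) (γ2 β) ≤ (1 - α) * dist x a + β * dist a y := by
      calc dist (γ1 α) (γ2 β) ≤ dist (γ1 α) a + dist a (γ2 β) := dist_triangle _ _ _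
        _ = (1 - α) * dist x a + β * dist a y := by rw [e2, e3]
    have hlb : (1 - α) * dist x a + β * dist a y ≤ dist (γ1 α) (γ2 β) := by
      have t1 : dist x y ≤ dist x (γ2 β) + dist (γ2 β) y := dist_triangle _ _ _
      have t2 : dist x (γ2 β) ≤ dist x (γ1 α) + dist (γ1 α) (γ2 β) := dist_triangle _ _ _
      have e1' : dist x (γ1 α) = α * dist x a := by rw [dist_comm]; exact e1
      rw [e4] at t1; rw [e1'] at t2
      nlinarith
    have : dist (γ1 α) (γ2 β) = (1 - α) * dist x a + β * dist a y := le_antisymm hub hlb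
    rw [this, hd1s, hd2s, hαs]
    have : v = β * (1 - s) + s := by linarith
    rw [this]; ring
  refine ⟨γ, s, ⟨hs0.le, hs1.le⟩, ⟨?_, ?_, ?_⟩, ?_⟩
  · rw [leg1 0 le_rfl hs0.le, zero_div]; exact hγ1.1
  · rw [leg2 1 hs1]
    rw [div_self (by linarith : (1:ℝ) - s ≠ 0)]
    exact hγ2.2.1
  · intro u hu v hv
    rcases le_or_gt u s with hus | hus <;> rcases le_or_gt v s with hvs | hvs
    · rw [leg1 u hu.1 hus, leg1 v hv.1 hvs,
        hγ1.2.2 _ (mem1 u hu.1 hus) _ (mem1 v hv.1 hvs)]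
      rw [div_sub_div_same, abs_div, abs_of_pos hs0, div_mul_eq_mul_div, hd1s,
        mul_comm s (dist x y), ← mul_assoc, mul_div_assoc, div_self hs0.ne', mul_one]
    · rw [cross u v hu.1 hus hvs hv.2, abs_of_nonpos (by linarith : u - v ≤ 0), neg_sub]
    · rw [dist_comm (γ u) (γ v), cross v u hv.1 hvs hus hu.2,
        abs_of_nonneg (by linarith : 0 ≤ u - v)]
    · rw [leg2 u hus, leg2 v hvs,
        hγ2.2.2 _ (mem2 u hus hu.2) _ (mem2 v hvs hv.2)]
      have : (u - s) / (1 - s) - (v - s) / (1 - s) = (u - v) / (1 - s) := by ring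
      rw [this, abs_div, abs_of_pos (by linarith : (0:ℝ) < 1 - s), div_mul_eq_mul_div, hd2s,
        mul_comm (1-s) (dist x y), ← mul_assoc, mul_div_assoc,
        div_self (by linarith : (1:ℝ) - s ≠ 0), mul_one]
  · rw [leg1 s hs0.le le_rfl, div_self hs0.ne']
    exact hγ1.2.1

end AuxGeo

section AuxMeasure
variable {X : Type*} [MetricSpace X] [MeasurableSpace X] [BorelSpace X] {φ : ℝ → ℝ}

lemma cont_h (hφ : IsOrliczCost φ) (a : X) {t : ℝ} (ht : 0 < t) :
    Continuous (fun w : X => φ (dist a w / t)) := by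
  apply hφ.continuousOn.comp_continuous ((continuous_const.dist continuous_id).div_const t)
  intro w
  exact mem_Ici.2 (div_nonneg dist_nonneg ht.le)

lemma cont_hp (hφ : IsOrliczCost φ) {t : ℝ} (ht : 0 < t) :
    Continuous (fun z : X × X => φ (dist z.1 z.2 / t)) := by
  apply hφ.continuousOn.comp_continuous ((continuous_fst.dist continuous_snd).div_const t)
  intro z
  exact mem_Ici.2 (div_nonneg dist_nonneg ht.le)

/-- any coupling of `dirac a` with `μ` gives the same integral -/
lemma coupling_integral (hφ : IsOrliczCost φ) (a : X) (μ : Measure X)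
    {t : ℝ} (ht : 0 < t) {π : Measure (X × X)} (hπ : π ∈ Couplings (Measure.dirac a) μ) :
    ∫ z, φ (dist z.1 z.2 / t) ∂π = ∫ w, φ (dist a w / t) ∂μ := by
  obtain ⟨h1, h2⟩ := hπ
  have hae : ∀ᵐ z ∂π, z.1 = a := by
    rw [MeasureTheory.ae_iff]
    have : {z : X × X | ¬ z.1 = a} = Prod.fst ⁻¹' {a}ᶜ := rfl
    rw [this, ← Measure.map_apply measurable_fst (MeasurableSet.singleton a).compl, h1]
    simp
  calc ∫ z, φ (dist z.1 z.2 / t) ∂π = ∫ z : X × X, φ (dist a z.2 / t) ∂π := by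
        apply integral_congr_ae
        filter_upwards [hae] with z hz
        rw [hz]
    _ = ∫ w, φ (dist a w / t) ∂(π.map Prod.snd) := by
        rw [integral_map measurable_snd.aemeasurable
          ((cont_h hφ a ht).aestronglyMeasurable)]
    _ = ∫ w, φ (dist a w / t) ∂μ := by rw [h2]

lemma couplings_nonempty (a : X) (μ : Measure X) [IsProbabilityMeasure μ] :
    (μ.map (fun w => (a, w))) ∈ Couplings (Measure.dirac a) μ := by
  have hmeas : Measurable (fun w : X => (a, w)) := measurable_const.prodMk measurable_id
  constructor
  · rw [Measure.map_map measurable_fst hmeas]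
    have : (Prod.fst ∘ fun w : X => (a, w)) = fun _ => a := rfl
    rw [this, Measure.map_const]
    simp
  · rw [Measure.map_map measurable_snd hmeas]
    have : (Prod.snd ∘ fun w : X => (a, w)) = id := rfl
    rw [this, Measure.map_id]

lemma mixture_prob (x y : X) {l : ℝ} (hl0 : 0 < l) (hl1 : l < 1) :
    IsProbabilityMeasure
      (ENNReal.ofReal l • Measure.dirac x + ENNReal.ofReal (1 - l) • Measure.dirac y) := by
  constructor
  simp only [Measure.add_apply, Measure.smul_apply, smul_eq_mul, measure_univ, mul_one]
  rw [← ENNReal.ofReal_add hl0.le (by linarith), ← ENNReal.ofReal_one]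
  norm_num

lemma dirac_mix_integral (f : X → ℝ) (x y : X) (c d : ℝ≥0∞) (hc : c ≠ ⊤) (hd : d ≠ ⊤) :
    ∫ w, f w ∂(c • Measure.dirac x + d • Measure.dirac y)
      = c.toReal * f x + d.toReal * f y := by
  have hi : ∀ b : X, Integrable f (Measure.dirac b) := fun b =>
    (integrable_const (f b)).congr (ae_eq_dirac _).symm
  rw [integral_add_measure ((hi x).smul_measure hc) ((hi y).smul_measure hd),
    integral_smul_measure, integral_smul_measure, integral_dirac, integral_dirac]
  simp [smul_eq_mul]

lemma mixture_integral (hφ : IsOrliczCost φ) (a x y : X) {l : ℝ} (hl0 : 0 < l) (hl1 : l < 1)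
    {t : ℝ} (ht : 0 < t) :
    ∫ w, φ (dist a w / t)
        ∂(ENNReal.ofReal l • Measure.dirac x + ENNReal.ofReal (1 - l) • Measure.dirac y)
      = l * φ (dist a x / t) + (1 - l) * φ (dist a y / t) := by
  rw [dirac_mix_integral (fun w => φ (dist a w / t)) x y _ _ ofReal_ne_top ofReal_ne_top,
    ENNReal.toReal_ofReal hl0.le, ENNReal.toReal_ofReal (by linarith : (0:ℝ) ≤ 1 - l)]

lemma WOrlicz_formula (hφ : IsOrliczCost φ) (a x y : X) {l : ℝ} (hl0 : 0 < l) (hl1 : l < 1) :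
    WOrlicz φ (Measure.dirac a)
        (ENNReal.ofReal l • Measure.dirac x + ENNReal.ofReal (1 - l) • Measure.dirac y)
      = sInf {t : ℝ | 0 < t ∧ l * φ (dist a x / t) + (1 - l) * φ (dist a y / t) ≤ 1} := by
  set μ := ENNReal.ofReal l • Measure.dirac x + ENNReal.ofReal (1 - l) • Measure.dirac y with hμ
  have : IsProbabilityMeasure μ := mixture_prob x y hl0 hl1
  unfold WOrlicz
  congr 1
  ext t
  simp only [mem_setOf_eq]
  refine and_congr_right fun ht => ?_
  have himg : (fun π : Measure (X × X) => ∫ z, φ (dist z.1 z.2 / t) ∂π) ''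
      Couplings (Measure.dirac a) μ = {l * φ (dist a x / t) + (1 - l) * φ (dist a y / t)} := by
    apply Subset.antisymm
    · rintro v ⟨π, hπ, rfl⟩
      simp only [mem_singleton_iff]
      rw [coupling_integral hφ a μ ht hπ, hμ, mixture_integral hφ a x y hl0 hl1 ht]
    · rintro v rfl
      refine ⟨μ.map (fun w => (a, w)), couplings_nonempty a μ, ?_⟩
      show ∫ z : X × X, φ (dist z.1 z.2 / t) ∂(μ.map (fun w => (a, w))) = _
      rw [coupling_integral hφ a μ ht (couplings_nonempty a μ), hμ,
        mixture_integral hφ a x y hl0 hl1 ht]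
  rw [himg, csInf_singleton]

end AuxMeasure

/-- Let `X` be a geodesic metric space isometrically embedded via Dirac
deltas into the Orlicz–Wasserstein space `W_φ(X)`, `x ≠ y`, `0 < λ < 1` and
`μ = λ δ_x + (1-λ) δ_y`.  Then any point minimizing `z ↦ W_φ(δ_z, μ)` lies on a minimizing
geodesic from `x` to `y`; more precisely, for every `a` not on any minimizing geodesic from
`x` to `y` there is `a'` on a minimizing geodesic from `x` to `y` with
`W_φ(δ_{a'}, μ) < W_φ(δ_a, μ)`. -/
theorem WOrlicz_minimizers_lie_on_geodesics {X : Type*} [MetricSpace X] [MeasurableSpace X]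
    [BorelSpace X] (hgeo : IsGeodesicSpace X) (φ : ℝ → ℝ) (hφ : IsOrliczCost φ)
    (x y : X) (hxy : x ≠ y) (l : ℝ) (hl0 : 0 < l) (hl1 : l < 1)
    (μ : Measure X)
    (hμ : μ = ENNReal.ofReal l • Measure.dirac x + ENNReal.ofReal (1 - l) • Measure.dirac y) :
    (∀ a : X, (∀ b : X, WOrlicz φ (Measure.dirac a) μ ≤ WOrlicz φ (Measure.dirac b) μ) →
        OnMinGeodesic a x y) ∧
    (∀ a : X, ¬ OnMinGeodesic a x y → ∃ a' : X, OnMinGeodesic a' x y ∧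
        WOrlicz φ (Measure.dirac a') μ < WOrlicz φ (Measure.dirac a) μ) := by
  subst hμ
  have part2 : ∀ a : X, ¬ OnMinGeodesic a x y → ∃ a' : X, OnMinGeodesic a' x y ∧
      WOrlicz φ (Measure.dirac a')
          (ENNReal.ofReal l • Measure.dirac x + ENNReal.ofReal (1 - l) • Measure.dirac y) <
        WOrlicz φ (Measure.dirac a)
          (ENNReal.ofReal l • Measure.dirac x + ENNReal.ofReal (1 - l) • Measure.dirac y) := by
    intro a ha
    have hax : a ≠ x := fun h => ha (h ▸ onMinGeodesic_left hgeo x y)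
    have hay : a ≠ y := fun h => ha (h ▸ onMinGeodesic_right hgeo x y)
    have hdax : 0 < dist a x := dist_pos.2 hax
    have hday : 0 < dist a y := dist_pos.2 hay
    have hdxy : 0 < dist x y := dist_pos.2 hxy
    have htri : dist x y < dist x a + dist a y := by
      rcases lt_or_eq_of_le (dist_triangle x a y) with h | h
      · exact h
      · exact absurd (onMinGeodesic_of_dist_eq hgeo h.symm) ha
    rcases le_or_gt (dist x y) (dist a x) with hc1 | hc1
    · refine ⟨y, onMinGeodesic_right hgeo x y, ?_⟩
      rw [WOrlicz_formula hφ y x y hl0 hl1, WOrlicz_formula hφ a x y hl0 hl1]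
      refine key_sInf_lt hφ hl0 hl1 dist_nonneg dist_nonneg ?_ ?_ (Or.inr ?_) (Or.inl hdax)
      · rw [dist_comm y x]; exact hc1
      · rw [dist_self]; exact hday.le
      · rw [dist_self]; exact hday
    rcases le_or_gt (dist x y) (dist a y) with hc2 | hc2
    · refine ⟨x, onMinGeodesic_left hgeo x y, ?_⟩
      rw [WOrlicz_formula hφ x x y hl0 hl1, WOrlicz_formula hφ a x y hl0 hl1]
      refine key_sInf_lt hφ hl0 hl1 dist_nonneg dist_nonneg ?_ ?_ (Or.inl ?_) (Or.inl hdax)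
      · rw [dist_self]; exact hdax.le
      · exact hc2
      · rw [dist_self]; exact hdax
    · obtain ⟨γ, hγ⟩ := hgeo x y
      set t0 : ℝ := dist a x / dist x y with ht0def
      have ht0m : t0 ∈ Set.Icc (0:ℝ) 1 :=
        ⟨div_nonneg dist_nonneg hdxy.le, le_of_lt ((div_lt_one hdxy).2 hc1)⟩
      refine ⟨γ t0, ⟨γ, t0, ht0m, hγ, rfl⟩, ?_⟩
      have e1 : dist (γ t0) x = dist a x := by
        have h' := hγ.2.2 t0 ht0m 0 (by norm_num)
        rw [hγ.1] at h'
        rw [h', sub_zero, abs_of_nonneg ht0m.1, ht0def, div_mul_cancel₀ _ hdxy.ne']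
      have e2 : dist (γ t0) y = dist x y - dist a x := by
        have h' := hγ.2.2 t0 ht0m 1 (by norm_num)
        rw [hγ.2.1] at h'
        rw [h', abs_of_nonpos (by linarith [ht0m.2]), neg_sub, sub_mul, one_mul, ht0def,
          div_mul_cancel₀ _ hdxy.ne']
      rw [WOrlicz_formula hφ (γ t0) x y hl0 hl1, WOrlicz_formula hφ a x y hl0 hl1]
      refine key_sInf_lt hφ hl0 hl1 dist_nonneg dist_nonneg e1.le ?_ (Or.inr ?_) (Or.inl hdax)
      · rw [e2, dist_comm a x]; linarith
      · rw [e2, dist_comm a x]; linarith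
  refine ⟨?_, part2⟩
  intro a hmin
  by_contra h
  obtain ⟨a', _, hlt⟩ := part2 a h
  exact absurd (hmin a') (not_le.2 hlt)
end
end
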